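/- arXiv:2204.13055 — 6 statements merged into one kernel-verified Lean document; each statement's English description precedes it below -/
import Mathlib

section
/- Let G be a finite group and let E(G) denote the subgroup generated by all components of G. Then the centralizer C_G(E(G)) has no components, and the Fitting subgroup of C_G(E(G)) equals the Fitting subgroup of G; consequently the generalized Fitting subgroup of C_G(E(G)) equals F(G). -/
attribute [local instance] Classical.propDecidable

noncomputable section

namespace QF

/-! ## Group-theoretic notions -/

/-- `H` is a normal subgroup of `K` (as subgroups of an ambient group `G`). -/
def NormalIn {G : Type*} [Group G] (H K : Subgroup G) : Prop :=
  H ≤ K ∧ ∀ k ∈ K, ∀ h ∈ H, k * h * k⁻¹ ∈ H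

/-- `L` is a subnormal subgroup of `G`: there is a finite chain of subgroups from `L` to `G`,
each normal in the next. -/
def IsSubnormal {G : Type*} [Group G] (L : Subgroup G) : Prop :=
  ∃ (n : ℕ) (c : ℕ → Subgroup G), c 0 = L ∧ c n = ⊤ ∧ ∀ i < n, NormalIn (c i) (c (i + 1))

/-- `L` is quasisimple: `L = [L,L]` and `L/Z(L)` is a nonabelian simple group. -/
def IsQuasisimple {G : Type*} [Group G] (L : Subgroup G) : Prop :=
  ⁅L, L⁆ = L ∧ IsSimpleGroup (↥L ⧸ Subgroup.center ↥L) ∧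
    ∃ a b : ↥L ⧸ Subgroup.center ↥L, a * b ≠ b * a

/-- A component of a group: a subnormal quasisimple subgroup. -/
def IsComponent {G : Type*} [Group G] (L : Subgroup G) : Prop :=
  IsSubnormal L ∧ IsQuasisimple L

/-- The Fitting subgroup: the subgroup generated by all nilpotent normal subgroups. -/
def fittingSubgroup (G : Type*) [Group G] : Subgroup G :=
  sSup {N : Subgroup G | N.Normal ∧ Group.IsNilpotent ↥N}

/-- `E(G)`: the subgroup generated by all components of `G`. -/
def layer (G : Type*) [Group G] : Subgroup G :=
  sSup {L : Subgroup G | IsComponent L}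

/-- The generalized Fitting subgroup `F*(G) = F(G) ⬝ E(G)`. -/
def genFitting (G : Type*) [Group G] : Subgroup G :=
  fittingSubgroup G ⊔ layer G

/-- `O_p(G) = 1`: every normal `p`-subgroup of `G` is trivial. -/
def OpTrivial (p : ℕ) (G : Type*) [Group G] : Prop :=
  ∀ N : Subgroup G, N.Normal → IsPGroup p ↥N → N = ⊥

/-- `E` is an elementary abelian `p`-subgroup (possibly trivial). -/
def IsElemAb (p : ℕ) {G : Type*} [Group G] (E : Subgroup G) : Prop :=
  (∀ x ∈ E, ∀ y ∈ E, x * y = y * x) ∧ ∀ x ∈ E, x ^ p = 1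

/-- The Quillen poset `A_p(H)` of nontrivial elementary abelian `p`-subgroups of `G`
contained in the subgroup `H`, regarded as a set of subgroups of `G`. -/
def apIn (p : ℕ) {G : Type*} [Group G] (H : Subgroup G) : Set (Subgroup G) :=
  {E | E ≠ ⊥ ∧ IsElemAb p E ∧ E ≤ H}

/-- The `p`-outer poset of `L` in `G`: nontrivial elementary abelian `p`-subgroups `B`
of `N_G(L)` with `B ∩ (L C_G(L)) = 1`. -/
def outPoset (p : ℕ) {G : Type*} [Group G] (L : Subgroup G) : Set (Subgroup G) :=
  {B | B ≠ ⊥ ∧ IsElemAb p B ∧ B ≤ Subgroup.normalizer (L : Set G) ∧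
    B ⊓ (L ⊔ Subgroup.centralizer (L : Set G)) = ⊥}

/-- The `p`-rank of a group: the largest `n` such that `K` contains an elementary abelian
`p`-subgroup of order `p ^ n`. -/
def pRank (p : ℕ) (K : Type*) [Group K] : ℕ :=
  sSup {n : ℕ | ∃ E : Subgroup K, IsElemAb p E ∧ Nat.card ↥E = p ^ n}

/-- The `p`-local `q`-rank of a group `K`: the maximum of the `q`-ranks of normalizers of
nontrivial `p`-subgroups. -/
def pLocalRank (p q : ℕ) (K : Type*) [Group K] : ℕ :=
  sSup {n : ℕ | ∃ P : Subgroup K, P ≠ ⊥ ∧ IsPGroup p ↥P ∧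
    ∃ E : Subgroup K, E ≤ Subgroup.normalizer (P : Set K) ∧ IsElemAb q E ∧ Nat.card ↥E = q ^ n}

/-- A group is `q`-elementary if it is the (internal) direct product of a cyclic group and
a `q`-group. -/
def qElementary (q : ℕ) (G : Type*) [Group G] : Prop :=
  ∃ C R : Subgroup G, IsCyclic ↥C ∧ IsPGroup q ↥R ∧
    (∀ c ∈ C, ∀ r ∈ R, c * r = r * c) ∧ C ⊓ R = ⊥ ∧ C ⊔ R = ⊤

/-! ## The augmented rational chain complex of a finite poset

We represent a rational simplicial chain of (degree `k - 1`) of a poset `α` as a function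
`Finset α → ℚ` supported on the `k`-element chains of `α`. -/

/-- The coefficient of the face `t` in the boundary of the simplex `s`: if `t ⊆ s` with
exactly one element `x` of `s` deleted, this is `(-1) ^ (number of elements of s below x)`. -/
def bdryCoeff {α : Type*} [PartialOrder α] (s t : Finset α) : ℚ :=
  if t ⊆ s ∧ t.card + 1 = s.card then
    ∑ x ∈ s \ t, (-1 : ℚ) ^ (s.filter fun y => y < x).card
  else 0

/-- The simplicial boundary operator (on functions `Finset α → ℚ`). -/
def bdryFun {α : Type*} [PartialOrder α] (f : Finset α → ℚ) : Finset α → ℚ :=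
  fun t => ∑ᶠ s : Finset α, bdryCoeff s t * f s

/-- `f` is a chain of size `k` (i.e. simplicial degree `k - 1`) of the subposet `S` of `α`:
it is supported on totally ordered `k`-element subsets of `S`. -/
def SuppOn {α : Type*} [PartialOrder α] (S : Set α) (k : ℕ) (f : Finset α → ℚ) : Prop :=
  ∀ s, f s ≠ 0 → s.card = k ∧ IsChain (· ≤ ·) (↑s : Set α) ∧ ↑s ⊆ S

/-- `f` is a cycle of size `k` (degree `k - 1`) of the augmented rational chain complex of
the subposet `S`. -/
def IsCycleOn {α : Type*} [PartialOrder α] (S : Set α) (k : ℕ) (f : Finset α → ℚ) : Prop :=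
  SuppOn S k f ∧ bdryFun f = 0

/-- `f` is a boundary of size `k` (degree `k - 1`) in the augmented rational chain complex of
the subposet `S`. -/
def IsBoundaryOn {α : Type*} [PartialOrder α] (S : Set α) (k : ℕ) (f : Finset α → ℚ) : Prop :=
  ∃ g : Finset α → ℚ, SuppOn S (k + 1) g ∧ bdryFun g = f

/-- The reduced rational homology of the subposet `S` is nonzero in degree `k - 1`. -/
def RHomNZ {α : Type*} [PartialOrder α] (S : Set α) (k : ℕ) : Prop :=
  ∃ f : Finset α → ℚ, IsCycleOn S k f ∧ ¬ IsBoundaryOn S k f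

/-- The reduced Euler characteristic of the subposet `S`:
`χ̃(S) = ∑_{n ≥ -1} (-1)^n f_n(S)` where `f_n` is the number of `(n+1)`-element chains. -/
def redEuler {α : Type*} [PartialOrder α] (S : Set α) : ℤ :=
  ∑ᶠ s : Finset α,
    if IsChain (· ≤ ·) (↑s : Set α) ∧ ↑s ⊆ S then (-1 : ℤ) ^ (s.card + 1) else 0

/-! ## Chains in a subcomplex of the order complex -/

/-- `f` is a chain of size `k` supported on the subcomplex `M` (together with the empty chain,
for the augmentation). -/
def SuppM {α : Type*} [PartialOrder α] (M : Set (Finset α)) (k : ℕ) (f : Finset α → ℚ) : Prop :=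
  ∀ s, f s ≠ 0 → s.card = k ∧ (s = ∅ ∨ s ∈ M)

/-- `f` is a cycle of size `k` of the (augmented) chain complex of the subcomplex `M`. -/
def IsCycleM {α : Type*} [PartialOrder α] (M : Set (Finset α)) (k : ℕ) (f : Finset α → ℚ) :
    Prop :=
  SuppM M k f ∧ bdryFun f = 0

/-- `f` is a boundary of size `k` in the (augmented) chain complex of the subcomplex `M`. -/
def IsBoundaryM {α : Type*} [PartialOrder α] (M : Set (Finset α)) (k : ℕ) (f : Finset α → ℚ) :
    Prop :=
  ∃ g : Finset α → ℚ, SuppM M (k + 1) g ∧ bdryFun g = f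

/-! ## Quillen-conjecture properties -/

/-- `G` satisfies (H-QC) at `p`: if `O_p(G) = 1` then `A_p(G)` has nonzero reduced rational
homology in some degree. -/
def HQC (p : ℕ) (G : Type*) [Group G] : Prop :=
  OpTrivial p G → ∃ k : ℕ, RHomNZ (apIn p (⊤ : Subgroup G)) k

/-- `K` has Quillen dimension at `p`: if `O_p(K) = 1` then `A_p(K)` has nonzero reduced
rational homology in degree `m_p(K) - 1`. -/
def QDp (p : ℕ) (K : Type*) [Group K] : Prop :=
  OpTrivial p K → RHomNZ (apIn p (⊤ : Subgroup K)) (pRank p K)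

/-- The fixed-point subposet `A_p(H)^Q` under conjugation by the subgroup `Q`. -/
def apFixed (p : ℕ) {G : Type*} [Group G] (H Q : Subgroup G) : Set (Subgroup G) :=
  {E | E ∈ apIn p H ∧ ∀ x ∈ Q, ∀ g : G, g ∈ E ↔ x * g * x⁻¹ ∈ E}

/-- The fixed-point subposet `A_p(H)^g` under conjugation by the element `g`. -/
def apFixedElt (p : ℕ) {G : Type*} [Group G] (H : Subgroup G) (g : G) : Set (Subgroup G) :=
  {E | E ∈ apIn p H ∧ ∀ h : G, h ∈ E ↔ g * h * g⁻¹ ∈ E}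

/-- Property `R(2)` for a (nonabelian simple) group `L`. -/
def PropertyR2 (L : Type*) [Group L] : Prop :=
  ∃ Q : Subgroup L, qElementary 3 ↥Q ∧ Odd (Nat.card ↥Q) ∧ ¬ OpTrivial 3 ↥Q ∧
    ¬ ((3 : ℤ) ∣ redEuler (apFixed 2 (⊤ : Subgroup L) Q)) ∧
    ∀ E : Subgroup (MulAut L), E ≠ ⊥ → IsElemAb 2 E →
      E ≤ Subgroup.centralizer
        ((Subgroup.map (MulAut.conj : L →* MulAut L) Q : Subgroup (MulAut L)) : Set (MulAut L)) →
      E ≤ (MulAut.conj : L →* MulAut L).range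

/-! ## The pre-join of posets and the initial shuffle product -/

/-- The pre-join of `X` and `Y`: the poset `(C⁻X × C⁻Y) \ {(⊥, ⊥)}`. -/
abbrev PreJoin (X Y : Type*) := {p : WithBot X × WithBot Y // p ≠ (⊥, ⊥)}

/-- The embedding of `X` into the pre-join, `x ↦ (x, ⊥)`. -/
def inX {X Y : Type*} (x : X) : PreJoin X Y :=
  ⟨((x : WithBot X), ⊥), fun h => WithBot.coe_ne_bot (congrArg Prod.fst h)⟩

/-- The embedding of `Y` into the pre-join, `y ↦ (⊥, y)`. -/
def inY {X Y : Type*} (y : Y) : PreJoin X Y :=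
  ⟨(⊥, (y : WithBot Y)), fun h => WithBot.coe_ne_bot (congrArg Prod.snd h)⟩

/-- The element `(x, y)` of the pre-join. -/
def inXY {X Y : Type*} (x : X) (y : Y) : PreJoin X Y :=
  ⟨((x : WithBot X), (y : WithBot Y)), fun h => WithBot.coe_ne_bot (congrArg Prod.fst h)⟩

/-- `c` is a shuffle chain for the pair `(a, b)`: a maximal chain of the grid poset determined
by the `X`-part of `a` and by `b` (with the bottom `(⊥, ⊥)` removed), i.e. a chain of the
pre-join of cardinality `|a_X| + |b|` whose coordinates come from `a` and `b`. -/
def gridOK {X Y W : Type*} [PartialOrder X] [PartialOrder Y] [PartialOrder W]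
    (ιP : PreJoin X Y ↪o W) (a b : Finset W) (c : Finset (PreJoin X Y)) : Prop :=
  IsChain (· ≤ ·) (↑c : Set (PreJoin X Y)) ∧
  c.card = (a.filter fun w => ∃ x : X, w = ιP (inX x)).card + b.card ∧
  ∀ q ∈ c, (q.1.1 = ⊥ ∨ ∃ x : X, q.1.1 = (x : WithBot X) ∧ ιP (inX x) ∈ a) ∧
    (q.1.2 = ⊥ ∨ ∃ y : Y, q.1.2 = (y : WithBot Y) ∧ ιP (inY y) ∈ b)

/-- The number of inversions of the shuffle chain `c` (the number of cells of the
`a_X × b` rectangle lying below the corresponding lattice path). -/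
def invCount {X Y W : Type*} [PartialOrder X] [PartialOrder Y] [PartialOrder W]
    (ιP : PreJoin X Y ↪o W) (a b : Finset W) (c : Finset (PreJoin X Y)) : ℕ :=
  Set.ncard {xy : X × Y | ιP (inX xy.1) ∈ a ∧ ιP (inY xy.2) ∈ b ∧
    ∀ q ∈ c, q.1.1 = (xy.1 : WithBot X) → (xy.2 : WithBot Y) ≤ q.1.2}

/-- The coefficient of the chain `e` of `W` in the initial shuffle product `T(a, b)`. -/
def Tcoeff {X Y Z W : Type*} [PartialOrder X] [PartialOrder Y] [PartialOrder Z] [PartialOrder W]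
    (ιP : PreJoin X Y ↪o W) (ιZ : Z ↪o W) (a b e : Finset W) : ℚ :=
  ∑ᶠ c : Finset (PreJoin X Y),
    if gridOK ιP a b c ∧
        e = c.image (fun q => ιP q) ∪ a.filter (fun w => ∃ z : Z, w = ιZ z) then
      (-1 : ℚ) ^ invCount ιP a b c
    else 0

/-- The initial shuffle product `T_*(f ⊗ g)`, as a function on `Finset W`. -/
def Tmap {X Y Z W : Type*} [PartialOrder X] [PartialOrder Y] [PartialOrder Z] [PartialOrder W]
    (ιP : PreJoin X Y ↪o W) (ιZ : Z ↪o W) (f g : Finset W → ℚ) : Finset W → ℚ :=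
  fun e => ∑ᶠ a : Finset W, ∑ᶠ b : Finset W, f a * g b * Tcoeff ιP ιZ a b e


section Aux

open Subgroup

/-- Transfer `IsSimpleGroup` across a `MulEquiv`. -/
lemma isSimpleGroup_of_mulEquiv {A B : Type*} [Group A] [Group B] (e : A ≃* B)
    (h : IsSimpleGroup A) : IsSimpleGroup B := by
  haveI := h.toNontrivial
  haveI : Nontrivial B := e.symm.toEquiv.nontrivial
  refine ⟨fun H hH => ?_⟩
  have hc : (H.comap e.toMonoidHom).Normal := hH.comap _
  rcases h.eq_bot_or_eq_top_of_normal _ hc with h1 | h1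
  · left
    have := congrArg (Subgroup.map e.toMonoidHom) h1
    rwa [Subgroup.map_comap_eq_self_of_surjective e.surjective, Subgroup.map_bot] at this
  · right
    have := congrArg (Subgroup.map e.toMonoidHom) h1
    rwa [Subgroup.map_comap_eq_self_of_surjective e.surjective,
      Subgroup.map_top_of_surjective _ e.surjective] at this

lemma map_center_eq {A B : Type*} [Group A] [Group B] (e : A ≃* B) :
    Subgroup.map e.toMonoidHom (Subgroup.center A) = Subgroup.center B := by
  ext b
  simp only [Subgroup.mem_map]
  constructor
  · rintro ⟨a, ha, rfl⟩
    rw [Subgroup.mem_center_iff] at ha ⊢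
    intro g
    have : g = e (e.symm g) := (e.apply_symm_apply g).symm
    show g * e a = e a * g
    rw [this, ← map_mul, ← map_mul, ha]
  · intro hb
    refine ⟨e.symm b, ?_, e.apply_symm_apply b⟩
    rw [Subgroup.mem_center_iff] at hb ⊢
    intro g
    apply e.injective
    rw [map_mul, map_mul, e.apply_symm_apply]
    exact hb (e g)

/-- Transfer quasisimplicity along an isomorphism of the subgroups,
given the perfectness of the target. -/
lemma isQuasisimple_of_equiv {G H : Type*} [Group G] [Group H] {L : Subgroup G}
    {L' : Subgroup H} (e : ↥L ≃* ↥L') (hcomm : ⁅L', L'⁆ = L') (hQ : IsQuasisimple L) :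
    IsQuasisimple L' := by
  obtain ⟨h1, h2, a, b, hab⟩ := hQ
  refine ⟨hcomm, ?_, ?_⟩
  · exact isSimpleGroup_of_mulEquiv
      (QuotientGroup.congr (Subgroup.center ↥L) (Subgroup.center ↥L') e (map_center_eq e)) h2
  · let q := QuotientGroup.congr (Subgroup.center ↥L) (Subgroup.center ↥L') e (map_center_eq e)
    refine ⟨q a, q b, fun hc => hab (q.injective ?_)⟩
    rw [map_mul, map_mul, hc]

lemma IsQuasisimple.map_of_injective {G H : Type*} [Group G] [Group H] {f : G →* H}
    (hf : Function.Injective f) {L : Subgroup G} (h : IsQuasisimple L) :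
    IsQuasisimple (Subgroup.map f L) := by
  refine isQuasisimple_of_equiv (L.equivMapOfInjective f hf) ?_ h
  rw [← Subgroup.map_commutator, h.1]

lemma IsQuasisimple.subgroupOf {G : Type*} [Group G] {L M : Subgroup G} (hLM : L ≤ M)
    (h : IsQuasisimple L) : IsQuasisimple (L.subgroupOf M) := by
  refine isQuasisimple_of_equiv (Subgroup.subgroupOfEquivOfLe hLM).symm ?_ h
  apply Subgroup.map_injective (Subgroup.subtype_injective M)
  rw [Subgroup.map_commutator, Subgroup.subgroupOf_map_subtype, inf_eq_left.mpr hLM]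
  exact h.1

lemma NormalIn.map {G H : Type*} [Group G] [Group H] (f : G →* H) {A B : Subgroup G}
    (h : NormalIn A B) : NormalIn (A.map f) (B.map f) := by
  refine ⟨Subgroup.map_mono h.1, ?_⟩
  rintro k ⟨k₀, hk₀, rfl⟩ a ⟨a₀, ha₀, rfl⟩
  exact ⟨k₀ * a₀ * k₀⁻¹, h.2 k₀ hk₀ a₀ ha₀, by simp⟩

lemma NormalIn.subgroupOf {G : Type*} [Group G] {A B M : Subgroup G} (h : NormalIn A B) :
    NormalIn (A.subgroupOf M) (B.subgroupOf M) := by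
  refine ⟨fun x hx => h.1 hx, ?_⟩
  intro k hk a ha
  exact h.2 (k : G) hk (a : G) ha

lemma chain_le {G : Type*} [Group G] {c : ℕ → Subgroup G} {n : ℕ}
    (h : ∀ i < n, NormalIn (c i) (c (i + 1))) {i j : ℕ} (hij : i ≤ j) (hj : j ≤ n) :
    c i ≤ c j := by
  induction j, hij using Nat.le_induction with
  | base => exact le_rfl
  | succ j hij ih => exact (ih (by omega)).trans (h j (by omega)).1

end Aux

section CommLemma

open Subgroup Pointwise commutatorElement

universe u

/-- Base case: a nilpotent normal subgroup of a quasisimple group is central. -/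
lemma commutator_top_eq_bot {H : Type*} [Group H]
    (hperf : ⁅(⊤ : Subgroup H), (⊤ : Subgroup H)⁆ = ⊤)
    (hs : IsSimpleGroup (↥(⊤ : Subgroup H) ⧸ Subgroup.center ↥(⊤ : Subgroup H)))
    {N : Subgroup H} (hN : N.Normal) (hnil : Group.IsNilpotent ↥N) :
    ⁅(⊤ : Subgroup H), N⁆ = ⊥ := by
  have hs' : IsSimpleGroup (H ⧸ Subgroup.center H) :=
    isSimpleGroup_of_mulEquiv
      (QuotientGroup.congr _ _ (Subgroup.topEquiv) (map_center_eq Subgroup.topEquiv)) hs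
  set π := QuotientGroup.mk' (Subgroup.center H) with hπ
  have hsurj : Function.Surjective π := QuotientGroup.mk_surjective
  have hmapN : (N.map π).Normal := hN.map π hsurj
  rcases hs'.eq_bot_or_eq_top_of_normal _ hmapN with h1 | h1
  · -- N is central
    have hNc : N ≤ Subgroup.center H := by
      have := (Subgroup.map_eq_bot_iff N).mp h1
      rwa [QuotientGroup.ker_mk'] at this
    rw [Subgroup.commutator_eq_bot_iff_le_centralizer]
    intro g _
    rw [Subgroup.mem_centralizer_iff]
    intro n hn
    exact (Subgroup.mem_center_iff.mp (hNc hn) g).symm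
  · -- N ⊔ Z = ⊤, so H/N is abelian, so N = ⊤ by perfectness, so H is nilpotent perfect: trivial
    exfalso
    have hsup : N ⊔ Subgroup.center H = ⊤ := by
      have := congrArg (Subgroup.comap π) h1
      rwa [Subgroup.comap_map_eq, QuotientGroup.ker_mk', Subgroup.comap_top] at this
    have hNtop : N = ⊤ := by
      have hab : ⁅(⊤ : Subgroup H), (⊤ : Subgroup H)⁆ ≤ N := by
        rw [Subgroup.commutator_le]
        intro a _ b _
        have hmem : ∀ x : H, x ∈ ((N : Set H) * (Subgroup.center H : Set H)) := by
          intro x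
          rw [← Subgroup.mul_normal N (Subgroup.center H), hsup]
          trivial
        have hqz : ∀ x : H, ∃ z ∈ Subgroup.center H,
            (QuotientGroup.mk' N) x = (QuotientGroup.mk' N) z := by
          intro x
          obtain ⟨nx, hnx, zx, hzx, hxe⟩ := hmem x
          refine ⟨zx, hzx, ?_⟩
          have h1x : (QuotientGroup.mk' N) nx = 1 := (QuotientGroup.eq_one_iff nx).mpr hnx
          rw [← hxe, map_mul, h1x, one_mul]
        have : (QuotientGroup.mk' N) ⁅a, b⁆ = 1 := by
          rw [map_commutatorElement]
          obtain ⟨za, hza, hqa⟩ := hqz a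
          obtain ⟨zb, hzb, hqb⟩ := hqz b
          rw [hqa, hqb, commutatorElement_eq_one_iff_mul_comm, ← map_mul, ← map_mul]
          exact congrArg _ ((Subgroup.mem_center_iff.mp hza zb).symm)
        exact (QuotientGroup.eq_one_iff _).mp this
      rw [hperf] at hab
      exact top_le_iff.mp hab
    have hnilH : Group.IsNilpotent H := by
      rw [hNtop] at hnil
      exact nilpotent_of_mulEquiv (G := ↥(⊤ : Subgroup H)) Subgroup.topEquiv
    have hlcs : ∀ m : ℕ, Subgroup.lowerCentralSeries (⊤ : Subgroup H) m = ⊤ := by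
      intro m
      induction m with
      | zero => rfl
      | succ m ih =>
        show ⁅Subgroup.lowerCentralSeries (⊤ : Subgroup H) m, ⊤⁆ = ⊤
        rw [ih]; exact hperf
    obtain ⟨m, hm⟩ := Subgroup.nilpotent_iff_lowerCentralSeries.mp hnilH
    rw [hlcs m] at hm
    have hsub : Subsingleton H := by
      constructor
      intro x y
      have hx : x ∈ (⊥ : Subgroup H) := hm ▸ Subgroup.mem_top x
      have hy : y ∈ (⊥ : Subgroup H) := hm ▸ Subgroup.mem_top y
      rw [Subgroup.mem_bot] at hx hy
      rw [hx, hy]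
    haveI := hsub
    haveI : Subsingleton (H ⧸ Subgroup.center H) :=
      Function.Surjective.subsingleton hsurj
    exact not_subsingleton_iff_nontrivial.mpr hs'.toNontrivial this

/-- Main commutation lemma: a quasisimple subnormal subgroup commutes with every
nilpotent normal subgroup. -/
lemma commutator_eq_bot_of_subnormal :
    ∀ (n : ℕ) {G : Type u} [Group G] (L N : Subgroup G) (c : ℕ → Subgroup G),
      c 0 = L → c n = ⊤ → (∀ i < n, NormalIn (c i) (c (i + 1))) → IsQuasisimple L →
      N.Normal → Group.IsNilpotent ↥N → ⁅L, N⁆ = ⊥ := by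
  intro n
  induction n with
  | zero =>
    intro G _ L N c h0 hn hc hq hN hnil
    have hL : L = ⊤ := h0 ▸ hn.symm ▸ rfl
    subst hL
    exact commutator_top_eq_bot hq.1 hq.2.1 hN hnil
  | succ n ih =>
    intro G _ L N c h0 hn hc hq hN hnil
    set M := c n with hM
    have hMnorm : M.Normal := by
      constructor
      intro m hm g
      have := (hc n (Nat.lt_succ_self n)).2
      rw [hn] at this
      exact this g trivial m hm
    have hLM : L ≤ M := h0 ▸ chain_le (n := n + 1) hc (Nat.zero_le n) (Nat.le_succ n)
    -- move to ↥M
    have hQ2 : ⁅L, N ⊓ M⁆ = ⊥ := by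
      have key : ⁅L.subgroupOf M, (N ⊓ M).subgroupOf M⁆ = ⊥ := by
        refine ih (L.subgroupOf M) ((N ⊓ M).subgroupOf M)
          (fun i => (c (min i n)).subgroupOf M) ?_ ?_ ?_ ?_ ?_ ?_
        · show (c (min 0 n)).subgroupOf M = L.subgroupOf M
          rw [min_eq_left (Nat.zero_le n), h0]
        · show (c (min n n)).subgroupOf M = ⊤
          rw [min_self]
          exact Subgroup.subgroupOf_self M
        · intro i hi
          show NormalIn ((c (min i n)).subgroupOf M) ((c (min (i + 1) n)).subgroupOf M)
          rw [min_eq_left hi.le, min_eq_left hi]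
          exact (hc i (hi.trans (Nat.lt_succ_self n))).subgroupOf
        · exact hq.subgroupOf hLM
        · rw [Subgroup.normal_subgroupOf_iff inf_le_right]
          intro h g hh hg
          exact ⟨hN.conj_mem h hh.1 g, Subgroup.mul_mem _ (Subgroup.mul_mem _ hg hh.2)
            (Subgroup.inv_mem _ hg)⟩
        · have e1 : ↥((N ⊓ M).subgroupOf M) ≃* ↥(N ⊓ M) :=
            Subgroup.subgroupOfEquivOfLe inf_le_right
          have e2 : ↥((N ⊓ M).subgroupOf N) ≃* ↥(N ⊓ M) :=
            Subgroup.subgroupOfEquivOfLe inf_le_left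
          haveI : Group.IsNilpotent ↥((N ⊓ M).subgroupOf N) := Subgroup.isNilpotent _
          exact nilpotent_of_mulEquiv (e2.trans e1.symm)
      have := congrArg (Subgroup.map M.subtype) key
      rwa [Subgroup.map_commutator, Subgroup.subgroupOf_map_subtype,
        Subgroup.subgroupOf_map_subtype, inf_eq_left.mpr hLM,
        inf_eq_left.mpr (inf_le_right : N ⊓ M ≤ M), Subgroup.map_bot] at this
    have hsub : ⁅L, N⁆ ≤ N ⊓ M := by
      rw [Subgroup.commutator_le]
      intro a ha b hb
      constructor
      · have h1 : a * b * a⁻¹ ∈ N := by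
          have : b ∈ N := hb
          simpa using hN.conj_mem b hb a
        have : a * b * a⁻¹ * b⁻¹ ∈ N := Subgroup.mul_mem _ h1 (Subgroup.inv_mem _ hb)
        simpa [commutatorElement_def] using this
      · have h1 : b * a⁻¹ * b⁻¹ ∈ M := hMnorm.conj_mem a⁻¹ (Subgroup.inv_mem _ (hLM ha)) b
        have : a * (b * a⁻¹ * b⁻¹) ∈ M := Subgroup.mul_mem _ (hLM ha) h1
        simpa [commutatorElement_def, mul_assoc] using this
    have h1 : ⁅⁅L, N⁆, L⁆ = ⊥ := by
      rw [eq_bot_iff]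
      calc ⁅⁅L, N⁆, L⁆ ≤ ⁅N ⊓ M, L⁆ := Subgroup.commutator_mono hsub le_rfl
        _ = ⁅L, N ⊓ M⁆ := Subgroup.commutator_comm _ _
        _ = ⊥ := hQ2
    have h2 : ⁅⁅N, L⁆, L⁆ = ⊥ := by rw [Subgroup.commutator_comm N L]; exact h1
    have h3 := Subgroup.commutator_commutator_eq_bot_of_rotate h1 h2
    rwa [hq.1] at h3

end CommLemma

section Fitting

open Subgroup Pointwise

lemma finite_subgroups {K : Type*} [Group K] [Finite K] : Finite (Subgroup K) :=
  Finite.of_injective (fun H => (H : Set K)) SetLike.coe_injective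

lemma finite_sylow {K : Type*} [Group K] [Finite K] (p : ℕ) : Finite (Sylow p K) := by
  haveI := finite_subgroups (K := K)
  exact Finite.of_injective (fun P => (P : Subgroup K)) (fun a b h => Sylow.ext h)

/-- Every `p`-subgroup is contained in a normal Sylow `p`-subgroup. -/
lemma le_sylow_of_normal {K : Type*} [Group K] {p : ℕ} (P : Sylow p K)
    (hP : (P : Subgroup K).Normal) {Q : Subgroup K} (hQ : IsPGroup p ↥Q) :
    Q ≤ (P : Subgroup K) := by
  haveI := hP
  have h := P.is_maximal' (hQ.to_sup_of_normal_right P.isPGroup') le_sup_right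
  rw [← h]
  exact le_sup_left

/-- In a finite group, the join of one Sylow subgroup for each prime is everything. -/
lemma iSup_sylow_eq_top {K : Type*} [Group K] [Finite K]
    (S : ∀ p : {q : ℕ // q.Prime}, Sylow p K) :
    (⨆ p : {q : ℕ // q.Prime}, (S p : Subgroup K)) = ⊤ := by
  rw [← Subgroup.index_eq_one]
  by_contra h
  obtain ⟨q, hq, hdvd⟩ := Nat.exists_prime_and_dvd h
  haveI : Fact q.Prime := ⟨hq⟩
  haveI : Finite (Sylow q K) := finite_sylow q
  have h2 : (⨆ p : {q : ℕ // q.Prime}, (S p : Subgroup K)).index ∣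
      ((S ⟨q, hq⟩ : Subgroup K)).index :=
    Subgroup.index_dvd_of_le (le_iSup (fun p : {q : ℕ // q.Prime} => (S p : Subgroup K)) ⟨q, hq⟩)
  have hrel : (S ⟨q, hq⟩ : Subgroup K).relIndex (Subgroup.normalizer ((S ⟨q, hq⟩ : Subgroup K) : Set K)) ≠ 0 :=
    Subgroup.index_ne_zero_of_finite
  exact Sylow.not_dvd_index' (S ⟨q, hq⟩) hrel (hdvd.trans h2)

/-- The Fitting subgroup is contained in the join of all normal `p`-subgroups. -/
lemma fitting_le_sSup_pgroups {D : Type*} [Group D] [Finite D] :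
    fittingSubgroup D ≤
      sSup {P : Subgroup D | P.Normal ∧ ∃ p : ℕ, p.Prime ∧ IsPGroup p ↥P} := by
  apply sSup_le
  rintro N ⟨hN, hnil⟩
  haveI := hN
  haveI := hnil
  set S : ∀ p : {q : ℕ // q.Prime}, Sylow p ↥N := fun _ => Classical.arbitrary _ with hS
  have hSnormal : ∀ p : {q : ℕ // q.Prime}, ((S p : Subgroup ↥N)).Normal := by
    intro p
    have htfae := (isNilpotent_of_finite_tfae (G := ↥N)).out 0 3
    exact htfae.mp hnil (p : ℕ) ⟨p.2⟩ (S p)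
  have hT : ∀ p : {q : ℕ // q.Prime},
      (Subgroup.map N.subtype (S p : Subgroup ↥N)).Normal ∧
      IsPGroup p ↥(Subgroup.map N.subtype (S p : Subgroup ↥N)) := by
    intro p
    haveI : Fact (p : ℕ).Prime := ⟨p.2⟩
    refine ⟨?_, (S p).isPGroup'.map _⟩
    constructor
    intro x hx g
    obtain ⟨y, hy, rfl⟩ := hx
    have hmap : Subgroup.map (MulAut.conjNormal g).toMonoidHom (S p : Subgroup ↥N) ≤
        (S p : Subgroup ↥N) :=
      le_sylow_of_normal (S p) (hSnormal p) ((S p).isPGroup'.map _)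
    have hmem : MulAut.conjNormal g y ∈ (S p : Subgroup ↥N) := hmap ⟨y, hy, rfl⟩
    exact ⟨_, hmem, MulAut.conjNormal_apply g y⟩
  have hjoin : N ≤ ⨆ p : {q : ℕ // q.Prime}, Subgroup.map N.subtype (S p : Subgroup ↥N) := by
    have htop := iSup_sylow_eq_top S
    have h2 := congrArg (Subgroup.map N.subtype) htop
    rw [(Subgroup.gc_map_comap N.subtype).l_iSup, ← MonoidHom.range_eq_map,
      Subgroup.range_subtype] at h2
    exact le_of_eq h2.symm
  exact hjoin.trans (iSup_le fun p => le_sSup ⟨(hT p).1, p, p.2, (hT p).2⟩)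

/-- The `p`-core: join of all normal `p`-subgroups. -/
def Op (p : ℕ) (D : Type*) [Group D] : Subgroup D :=
  sSup {P : Subgroup D | P.Normal ∧ IsPGroup p ↥P}

lemma Op_normal_isPGroup {D : Type*} [Group D] [Finite D] (p : ℕ) :
    (Op p D).Normal ∧ IsPGroup p ↥(Op p D) := by
  haveI : Finite (Subgroup D) := finite_subgroups
  have hfin : {P : Subgroup D | P.Normal ∧ IsPGroup p ↥P}.Finite := Set.toFinite _
  have heq : Op p D = hfin.toFinset.sup id := by
    rw [Finset.sup_id_eq_sSup, Set.Finite.coe_toFinset, Op]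
  rw [heq]
  refine Finset.sup_induction (p := fun H : Subgroup D => H.Normal ∧ IsPGroup p ↥H)
    ⟨inferInstance, IsPGroup.of_bot⟩ ?_ ?_
  · rintro A ⟨hA1, hA2⟩ B ⟨hB1, hB2⟩
    haveI := hA1
    haveI := hB1
    exact ⟨Subgroup.sup_normal A B, hA2.to_sup_of_normal_right hB2⟩
  · intro P hP
    simpa using hfin.mem_toFinset.mp hP

lemma map_map_symm {A : Type*} [Group A] (e : A ≃* A) (P : Subgroup A) :
    Subgroup.map e.toMonoidHom (Subgroup.map e.symm.toMonoidHom P) = P := by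
  ext x
  constructor
  · rintro ⟨y, ⟨z, hz, rfl⟩, rfl⟩
    simpa using hz
  · intro hx
    exact ⟨e.symm x, ⟨x, hx, rfl⟩, e.apply_symm_apply x⟩

lemma Op_map_le {D : Type*} [Group D] (p : ℕ) (e : D ≃* D) :
    Subgroup.map e.toMonoidHom (Op p D) ≤ Op p D := by
  rw [Op, (Subgroup.gc_map_comap e.toMonoidHom).l_sSup]
  apply iSup_le
  intro P
  apply iSup_le
  rintro ⟨hP1, hP2⟩
  exact le_sSup ⟨hP1.map e.toMonoidHom e.surjective, hP2.map _⟩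

lemma Op_map_eq {D : Type*} [Group D] (p : ℕ) (e : D ≃* D) :
    Subgroup.map e.toMonoidHom (Op p D) = Op p D := by
  refine le_antisymm (Op_map_le p e) ?_
  conv_lhs => rw [← map_map_symm e (Op p D)]
  exact Subgroup.map_mono (Op_map_le p e.symm)

end Fitting

section Layer

open Subgroup

lemma IsComponent.map_equiv {G H : Type*} [Group G] [Group H] (e : G ≃* H) {L : Subgroup G}
    (h : IsComponent L) : IsComponent (Subgroup.map e.toMonoidHom L) := by
  obtain ⟨⟨n, c, h0, hn, hc⟩, hq⟩ := h
  refine ⟨⟨n, fun i => Subgroup.map e.toMonoidHom (c i), ?_, ?_,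
    fun i hi => (hc i hi).map _⟩, hq.map_of_injective e.injective⟩
  · show Subgroup.map e.toMonoidHom (c 0) = _
    rw [h0]
  · show Subgroup.map e.toMonoidHom (c n) = ⊤
    rw [hn]
    exact Subgroup.map_top_of_surjective _ e.surjective

lemma layer_normal {G : Type*} [Group G] : (layer G).Normal := by
  constructor
  intro x hx g
  have hle : Subgroup.map (MulAut.conj g).toMonoidHom (layer G) ≤ layer G := by
    rw [layer, (Subgroup.gc_map_comap _).l_sSup]
    apply iSup_le
    intro L
    apply iSup_le
    intro hL
    exact le_sSup (hL.map_equiv (MulAut.conj g))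
  have hmem : (MulAut.conj g) x ∈ layer G := hle ⟨x, hx, rfl⟩
  simpa using hmem

lemma centralizer_normal_of_normal {G : Type*} [Group G] {H : Subgroup G} (hH : H.Normal) :
    (Subgroup.centralizer (H : Set G)).Normal := by
  constructor
  intro x hx g
  rw [Subgroup.mem_centralizer_iff] at hx ⊢
  intro h hh
  have h1 : g⁻¹ * h * g ∈ H := by
    have := hH.conj_mem h hh g⁻¹
    simpa using this
  have h2 := hx _ h1
  have h3 := congrArg (fun y => g * y * g⁻¹) h2
  simp only [mul_assoc] at h3 ⊢
  simpa [mul_assoc] using h3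

lemma IsComponent.map_subtype {G : Type*} [Group G] {C : Subgroup G} (hC : C.Normal)
    {M : Subgroup ↥C} (h : IsComponent M) : IsComponent (Subgroup.map C.subtype M) := by
  obtain ⟨⟨n, c, h0, hn, hc⟩, hq⟩ := h
  refine ⟨⟨n + 1, fun i => if i ≤ n then Subgroup.map C.subtype (c i) else ⊤, ?_, ?_, ?_⟩,
    hq.map_of_injective (Subgroup.subtype_injective C)⟩
  · simp [h0]
  · simp
  · intro i hi
    rcases Nat.lt_or_ge i n with h1 | h1
    · show NormalIn (if i ≤ n then _ else ⊤) (if i + 1 ≤ n then _ else ⊤)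
      rw [if_pos h1.le, if_pos (by omega : i + 1 ≤ n)]
      exact (hc i h1).map _
    · have hieq : i = n := by omega
      subst hieq
      show NormalIn (if i ≤ i then _ else ⊤) (if i + 1 ≤ i then _ else ⊤)
      rw [if_pos le_rfl, if_neg (by omega : ¬ i + 1 ≤ i)]
      rw [hn, ← MonoidHom.range_eq_map, Subgroup.range_subtype]
      exact ⟨le_top, fun k _ h hh => hC.conj_mem h hh k⟩

end Layer

/-- For a finite group `G`, the centralizer `C_G(E(G))` has no components,
its Fitting subgroup equals the Fitting subgroup of `G`, and consequently its generalized
Fitting subgroup equals `F(G)`. -/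
theorem statement0 {G : Type*} [Group G] [Finite G] :
    (¬ ∃ M : Subgroup ↥(Subgroup.centralizer (layer G : Set G)), IsComponent M) ∧
    Subgroup.map (Subgroup.centralizer (layer G : Set G)).subtype
      (fittingSubgroup ↥(Subgroup.centralizer (layer G : Set G))) = fittingSubgroup G ∧
    Subgroup.map (Subgroup.centralizer (layer G : Set G)).subtype
      (genFitting ↥(Subgroup.centralizer (layer G : Set G))) = fittingSubgroup G := by
  classical
  set C := Subgroup.centralizer (layer G : Set G) with hCdef
  have hCnorm : C.Normal := centralizer_normal_of_normal layer_normal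
  -- Part 1: no components in C
  have hnc : ¬ ∃ M : Subgroup ↥C, IsComponent M := by
    rintro ⟨M, hM⟩
    have hL : IsComponent (Subgroup.map C.subtype M) := hM.map_subtype hCnorm
    set L := Subgroup.map C.subtype M with hLdef
    have hLlayer : L ≤ layer G := le_sSup hL
    have hLC : L ≤ C := Subgroup.map_subtype_le M
    have habel : L ≤ Subgroup.centralizer (L : Set G) :=
      hLC.trans (Subgroup.centralizer_le (SetLike.coe_subset_coe.mpr hLlayer))
    obtain ⟨a, b, hab⟩ := hL.2.2.2
    have hcenter : Subgroup.center ↥L = ⊤ := by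
      rw [eq_top_iff]
      intro x _
      rw [Subgroup.mem_center_iff]
      intro y
      have hx := habel x.2
      rw [Subgroup.mem_centralizer_iff] at hx
      exact Subtype.ext (hx (y : G) y.2)
    have hsub : Subsingleton (↥L ⧸ Subgroup.center ↥L) := by
      rw [hcenter]
      exact QuotientGroup.subsingleton_quotient_top
    exact hab (Subsingleton.elim _ _)
  -- F(G) centralizes the layer
  have hFle : fittingSubgroup G ≤ C := by
    apply sSup_le
    rintro N ⟨hN, hnil⟩
    rw [hCdef, ← Subgroup.commutator_eq_bot_iff_le_centralizer,
      Subgroup.commutator_comm, Subgroup.commutator_eq_bot_iff_le_centralizer]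
    apply sSup_le
    rintro L hL
    obtain ⟨n, c, h0, hn, hc⟩ := hL.1
    rw [← Subgroup.commutator_eq_bot_iff_le_centralizer]
    exact commutator_eq_bot_of_subnormal n L N c h0 hn hc hL.2 hN hnil
  -- Part 2: the Fitting subgroups agree
  have hmain : Subgroup.map C.subtype (fittingSubgroup ↥C) = fittingSubgroup G := by
    apply le_antisymm
    · refine (Subgroup.map_mono (fitting_le_sSup_pgroups (D := ↥C))).trans ?_
      rw [(Subgroup.gc_map_comap C.subtype).l_sSup]
      apply iSup_le
      intro P
      apply iSup_le
      rintro ⟨hPn, p, hp, hPp⟩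
      haveI : Fact p.Prime := ⟨hp⟩
      have hPOp : P ≤ Op p ↥C := le_sSup ⟨hPn, hPp⟩
      refine (Subgroup.map_mono hPOp).trans ?_
      apply le_sSup
      haveI := hCnorm
      refine ⟨?_, ?_⟩
      · constructor
        intro x hx g
        obtain ⟨y, hy, rfl⟩ := hx
        have hOp := Op_map_eq p (MulAut.conjNormal (H := C) g : ↥C ≃* ↥C)
        have hmem : (MulAut.conjNormal (H := C) g : ↥C ≃* ↥C) y ∈ Op p ↥C := by
          rw [← hOp]
          exact ⟨y, hy, rfl⟩
        exact ⟨_, hmem, MulAut.conjNormal_apply g y⟩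
      · have hpg : IsPGroup p ↥(Subgroup.map C.subtype (Op p ↥C)) :=
          (Op_normal_isPGroup (D := ↥C) p).2.map _
        exact hpg.isNilpotent
    · apply sSup_le
      rintro N ⟨hN, hnil⟩
      have hNC : N ≤ C := (le_sSup (show N ∈ {N : Subgroup G | N.Normal ∧
        Group.IsNilpotent ↥N} from ⟨hN, hnil⟩)).trans hFle
      haveI := hnil
      have hN' : (N.subgroupOf C).Normal := hN.subgroupOf C
      have hnil' : Group.IsNilpotent ↥(N.subgroupOf C) :=
        nilpotent_of_mulEquiv (Subgroup.subgroupOfEquivOfLe hNC).symm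
      have hle : N.subgroupOf C ≤ fittingSubgroup ↥C := le_sSup ⟨hN', hnil'⟩
      have h2 := Subgroup.map_mono (f := C.subtype) hle
      rwa [Subgroup.subgroupOf_map_subtype, inf_eq_left.mpr hNC] at h2
  refine ⟨hnc, hmain, ?_⟩
  -- Part 3
  have hlayerC : layer ↥C = ⊥ := by
    have hempty : {L : Subgroup ↥C | IsComponent L} = ∅ := by
      rw [Set.eq_empty_iff_forall_notMem]
      intro M hM
      exact hnc ⟨M, hM⟩
    rw [layer, hempty, sSup_empty]
  rw [genFitting, hlayerC, sup_bot_eq, hmain]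


end QF
end
end

section
/- Let G be a finite group, L a component of G, and K ≤ G a subgroup. Suppose there is a subset S ⊆ L that is not contained in Z(L) and satisfies kSk⁻¹ = S for every k ∈ K. Then K ≤ N_G(L). -/
attribute [local instance] Classical.propDecidable

noncomputable section

namespace QF

open scoped Pointwise commutatorElement in
/-- In a quasisimple `L`, a `NormalIn`-subgroup not containing `L` centralizes `L`. -/
lemma aux_qs_central {G : Type*} [Group G] {L N : Subgroup G} (hQ : IsQuasisimple L)
    (hN : NormalIn N L) (hne : ¬ L ≤ N) : N ≤ Subgroup.centralizer (L : Set G) := by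
  obtain ⟨hcomm, hsimple, -⟩ := hQ
  haveI := hsimple
  set N' : Subgroup ↥L := N.subgroupOf L with hN'
  have hN'norm : N'.Normal := by
    constructor
    intro n hn g
    rw [Subgroup.mem_subgroupOf] at hn ⊢
    exact hN.2 g.1 g.2 n.1 hn
  set π := QuotientGroup.mk' (Subgroup.center ↥L) with hπ
  have hmapnorm : (N'.map π).Normal :=
    hN'norm.map π (QuotientGroup.mk'_surjective _)
  rcases hmapnorm.eq_bot_or_eq_top with hbot | htop
  · -- N' central in L
    rw [Subgroup.map_eq_bot_iff, QuotientGroup.ker_mk'] at hbot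
    intro n hn
    rw [Subgroup.mem_centralizer_iff]
    intro y hy
    have hnL : n ∈ L := hN.1 hn
    have : (⟨n, hnL⟩ : ↥L) ∈ Subgroup.center ↥L := hbot (Subgroup.mem_subgroupOf.mpr hn)
    have := (Subgroup.mem_center_iff.mp this) ⟨y, hy⟩
    exact congrArg Subtype.val this
  · exfalso
    have hsup : N' ⊔ Subgroup.center ↥L = ⊤ := by
      have := Subgroup.comap_map_eq π N'
      rw [htop, QuotientGroup.ker_mk'] at this
      simpa using this.symm
    have hc1 : ⁅(⊤ : Subgroup ↥L), (⊤ : Subgroup ↥L)⁆ ≤ N' := by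
      rw [Subgroup.commutator_le]
      intro a _ b _
      have ha0 : a ∈ N' ⊔ Subgroup.center ↥L := by rw [hsup]; trivial
      have ha : a ∈ (N' : Set ↥L) * (Subgroup.center ↥L : Set ↥L) := by
        rw [← Subgroup.normal_mul N' (Subgroup.center ↥L)]
        exact ha0
      obtain ⟨n, hn, z, hz, rfl⟩ := ha
      have hz' : ∀ w : ↥L, z * w = w * z := fun w => (Subgroup.mem_center_iff.mp hz w).symm
      have hzb : z * b * z⁻¹ = b := by rw [hz' b, mul_assoc, mul_inv_cancel, mul_one]
      have : ⁅n * z, b⁆ = n * (b * n⁻¹ * b⁻¹) := by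
        rw [commutatorElement_def]
        calc n * z * b * (n * z)⁻¹ * b⁻¹ = n * (z * b * z⁻¹) * n⁻¹ * b⁻¹ := by group
          _ = n * (b * n⁻¹ * b⁻¹) := by rw [hzb]; group
      rw [this]
      exact Subgroup.mul_mem _ hn (hN'norm.conj_mem _ (Subgroup.inv_mem _ hn) b)
    have hc2 : ⁅(⊤ : Subgroup ↥L), (⊤ : Subgroup ↥L)⁆ = ⊤ := by
      apply Subgroup.map_injective L.subtype_injective
      rw [Subgroup.map_commutator]
      have htopmap : Subgroup.map L.subtype ⊤ = L := by
        rw [← MonoidHom.range_eq_map, Subgroup.range_subtype]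
      rw [htopmap, hcomm]
    rw [hc2, top_le_iff, Subgroup.subgroupOf_eq_top] at hc1
    exact hne hc1

lemma aux_chain_le {G : Type*} [Group G] {c : ℕ → Subgroup G} {n : ℕ}
    (h : ∀ i < n, NormalIn (c i) (c (i + 1))) : ∀ i ≤ n, c 0 ≤ c i := by
  intro i hi
  induction i with
  | zero => exact le_rfl
  | succ j ih =>
      exact le_trans (ih (le_trans (Nat.le_succ j) hi))
        (h j (lt_of_lt_of_le (Nat.lt_succ_self j) hi)).1

open scoped commutatorElement in
/-- A quasisimple `L` with a subnormal chain to `T` centralizes every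
`NormalIn`-subgroup of `T` not containing `L`. -/
lemma aux_comp_centralizes {G : Type*} [Group G] : ∀ (d : ℕ) (L T N : Subgroup G)
    (c : ℕ → Subgroup G),
    c 0 = L → c d = T → (∀ i < d, NormalIn (c i) (c (i + 1))) →
    IsQuasisimple L → NormalIn N T → ¬ L ≤ N → ⁅L, N⁆ = ⊥ := by
  intro d
  induction d with
  | zero =>
      intro L T N c h0 hd _ hQ hN hne
      have hTL : T = L := by rw [← h0, hd]
      rw [Subgroup.commutator_comm, Subgroup.commutator_eq_bot_iff_le_centralizer]
      exact aux_qs_central hQ (hTL ▸ hN) hne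
  | succ d ih =>
      intro L T N c h0 hd hsteps hQ hN hne
      set H := c d with hH
      have hHT : NormalIn H T := hd ▸ hsteps d (Nat.lt_succ_self d)
      have hLH : L ≤ H :=
        h0 ▸ aux_chain_le (fun i hi => hsteps i (lt_trans hi (Nat.lt_succ_self d))) d le_rfl
      have hLT : L ≤ T := le_trans hLH hHT.1
      have hN0 : NormalIn (H ⊓ N) H := by
        refine ⟨inf_le_left, ?_⟩
        intro k hk h hh
        exact ⟨Subgroup.mul_mem _ (Subgroup.mul_mem _ hk hh.1) (Subgroup.inv_mem _ hk),
          hN.2 k (hHT.1 hk) h hh.2⟩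
      have hne0 : ¬ L ≤ H ⊓ N := fun h => hne (le_trans h inf_le_right)
      have hcent : ⁅L, H ⊓ N⁆ = ⊥ :=
        ih L H (H ⊓ N) c h0 rfl (fun i hi => hsteps i (lt_trans hi (Nat.lt_succ_self d)))
          hQ hN0 hne0
      have hLN_le : ⁅L, N⁆ ≤ H ⊓ N := by
        rw [Subgroup.commutator_le]
        intro x hx n hn
        constructor
        · have h1 : n * x⁻¹ * n⁻¹ ∈ H := hHT.2 n (hN.1 hn) x⁻¹ (Subgroup.inv_mem _ (hLH hx))
          have : ⁅x, n⁆ = x * (n * x⁻¹ * n⁻¹) := by rw [commutatorElement_def]; group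
          rw [this]
          exact Subgroup.mul_mem _ (hLH hx) h1
        · have h1 : x * n * x⁻¹ ∈ N := hN.2 x (hLT hx) n hn
          have : ⁅x, n⁆ = (x * n * x⁻¹) * n⁻¹ := by rw [commutatorElement_def]
          rw [this]
          exact Subgroup.mul_mem _ h1 (Subgroup.inv_mem _ hn)
      have hcentL : H ⊓ N ≤ Subgroup.centralizer (L : Set G) := by
        rw [← Subgroup.commutator_eq_bot_iff_le_centralizer, Subgroup.commutator_comm]
        exact hcent
      have h1 : ⁅⁅L, N⁆, L⁆ = ⊥ := by
        rw [eq_bot_iff]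
        refine le_trans (Subgroup.commutator_mono hLN_le le_rfl) ?_
        rw [← eq_bot_iff, Subgroup.commutator_eq_bot_iff_le_centralizer]
        exact hcentL
      have h2 : ⁅⁅N, L⁆, L⁆ = ⊥ := by rw [Subgroup.commutator_comm N L]; exact h1
      have h3 : ⁅⁅L, L⁆, N⁆ = ⊥ :=
        Subgroup.commutator_commutator_eq_bot_of_rotate h1 h2
      rwa [hQ.1] at h3

/-- A quasisimple subnormal subgroup and any subnormal subgroup: containment or commuting. -/
lemma aux_comp_le_or_commute {G : Type*} [Group G] (L : Subgroup G) (hLsub : IsSubnormal L)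
    (hQ : IsQuasisimple L) :
    ∀ (n : ℕ) (c : ℕ → Subgroup G) (H : Subgroup G), c 0 = H → c n = ⊤ →
    (∀ i < n, NormalIn (c i) (c (i + 1))) → L ≤ H ∨ ⁅L, H⁆ = ⊥ := by
  intro n
  induction n with
  | zero =>
      intro c H h0 hn _
      left
      rw [← h0, hn]
      exact le_top
  | succ n ih =>
      intro c H h0 hn hsteps
      have hstep0 : NormalIn H (c 1) := h0 ▸ hsteps 0 (Nat.succ_pos n)
      rcases ih (fun i => c (i + 1)) (c 1) rfl hn
          (fun i hi => hsteps (i + 1) (Nat.succ_lt_succ hi)) with h1 | h1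
      · by_cases hLH : L ≤ H
        · exact Or.inl hLH
        · right
          obtain ⟨m, cL, hcL0, hcLm, hcLsteps⟩ := hLsub
          refine aux_comp_centralizes m L (c 1) H (fun i => cL i ⊓ c 1) ?_ ?_ ?_ hQ hstep0 hLH
          · show cL 0 ⊓ c 1 = L
            rw [hcL0]; exact inf_eq_left.mpr h1
          · show cL m ⊓ c 1 = c 1
            rw [hcLm]; exact top_inf_eq _
          · intro i hi
            refine ⟨inf_le_inf_right _ (hcLsteps i hi).1, ?_⟩
            intro k hk h hh
            exact ⟨(hcLsteps i hi).2 k hk.1 h hh.1,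
              Subgroup.mul_mem _ (Subgroup.mul_mem _ hk.2 hh.2) (Subgroup.inv_mem _ hk.2)⟩
      · right
        rw [eq_bot_iff]
        exact le_trans (Subgroup.commutator_mono le_rfl hstep0.1) (le_of_eq h1)

/-- if `L` is a component of a finite group `G` and `K ≤ G` normalizes a subset
`S ⊆ L` not contained in `Z(L)`, then `K ≤ N_G(L)`. -/
theorem statement3 {G : Type*} [Group G] [Finite G] (L : Subgroup G) (hL : IsComponent L)
    (K : Subgroup G) (S : Set G) (hSL : S ⊆ (L : Set G))
    (hSZ : ¬ S ⊆ {x | x ∈ L ∧ ∀ y ∈ L, x * y = y * x})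
    (hK : ∀ k ∈ K, (fun h => k * h * k⁻¹) '' S = S) :
    K ≤ Subgroup.normalizer (L : Set G) := by
  intro k hk
  rw [Subgroup.mem_normalizer_iff]
  set f : G →* G := (MulAut.conj k).toMonoidHom with hf
  set M : Subgroup G := L.map f with hMdef
  have hfapp : ∀ g : G, f g = k * g * k⁻¹ := fun g => rfl
  have hfinj : Function.Injective f := (MulAut.conj k).injective
  have hmem : ∀ g : G, k * g * k⁻¹ ∈ M ↔ g ∈ L := by
    intro g
    constructor
    · rintro ⟨a, ha, hEq⟩
      have hag : a = g := by
        apply hfinj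
        rw [hEq]
        exact (hfapp g).symm
      exact hag ▸ ha
    · intro hg
      exact ⟨g, hg, hfapp g⟩
  -- M is subnormal
  obtain ⟨n, c, h0, hn, hsteps⟩ := hL.1
  have hMchain : ∀ i < n, NormalIn ((c i).map f) ((c (i + 1)).map f) := by
    intro i hi
    refine ⟨Subgroup.map_mono (hsteps i hi).1, ?_⟩
    rintro k' ⟨a, ha, rfl⟩ h' ⟨b, hb, rfl⟩
    exact ⟨a * b * a⁻¹, (hsteps i hi).2 a ha b hb, by simp [map_mul, map_inv]⟩
  rcases aux_comp_le_or_commute L hL.1 hL.2 n (fun i => (c i).map f) M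
      (by show (c 0).map f = M; rw [h0])
      (by show (c n).map f = ⊤
          rw [hn]; exact Subgroup.map_top_of_surjective f (MulAut.conj k).surjective)
      hMchain with hle | hcomm
  · -- L ≤ M : conclude L = M by cardinality
    have hcard : Nat.card ↥L = Nat.card ↥M :=
      Nat.card_congr (Subgroup.equivMapOfInjective L f hfinj).toEquiv
    have hLM : L = M := Subgroup.eq_of_le_of_card_ge hle (le_of_eq hcard.symm)
    intro g
    have h := (hmem g).symm
    rw [← hLM] at h
    exact h
  · -- L and M commute elementwise: contradiction with hSZ
    exfalso
    apply hSZ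
    intro s hs
    have hsL : s ∈ L := hSL hs
    have hsM : s ∈ M := by
      have : s ∈ (fun h => k * h * k⁻¹) '' S := (hK k hk).symm ▸ hs
      obtain ⟨s', hs', rfl⟩ := this
      exact (hmem s').mpr (hSL hs')
    have hMcent : M ≤ Subgroup.centralizer (L : Set G) := by
      rw [← Subgroup.commutator_eq_bot_iff_le_centralizer, Subgroup.commutator_comm]
      exact hcomm
    refine ⟨hsL, ?_⟩
    intro y hy
    exact ((Subgroup.mem_centralizer_iff.mp (hMcent hsM)) y hy).symm


end QF
end
end

section
/- Let p be a prime, G a finite group, L ≤ G a subgroup, and let B, E ≤ N_G(L) be abelian p-subgroups such that LB ≤ LE, where LB and LE denote the subgroups generated by L and B, respectively L and E. If O_p(C_G(LE)) = 1, then O_p(C_G(LB)) = 1. If moreover L is a component of G, then also O_p(LB) = 1. -/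
attribute [local instance] Classical.propDecidable

noncomputable section

namespace QF

section AuxStatement4
open Subgroup Pointwise

/-- `O_p(H)` as the intersection of all Sylow `p`-subgroups. -/
def OpSub (p : ℕ) (H : Type*) [Group H] : Subgroup H := ⨅ P : Sylow p H, ↑P

lemma OpSub_normal (p : ℕ) (H : Type*) [Group H] : (OpSub p H).Normal := by
  constructor
  intro n hn g
  rw [OpSub, Subgroup.mem_iInf] at hn ⊢
  intro P
  have h := hn (g⁻¹ • P)
  rw [Sylow.coe_subgroup_smul, Subgroup.mem_pointwise_smul_iff_inv_smul_mem] at h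
  simpa [MulAut.conj] using h

lemma OpSub_isPGroup (p : ℕ) (H : Type*) [Group H] : IsPGroup p ↥(OpSub p H) := by
  obtain ⟨P⟩ := (inferInstance : Nonempty (Sylow p H))
  exact P.isPGroup'.to_le (iInf_le _ P)

lemma le_OpSub {p : ℕ} (hp : p.Prime) (H : Type*) [Group H] [Finite H]
    {N : Subgroup H} (hN : N.Normal) (hNp : IsPGroup p ↥N) : N ≤ OpSub p H := by
  haveI : Fact p.Prime := ⟨hp⟩
  refine le_iInf fun P => ?_
  obtain ⟨Q, hQ⟩ := hNp.exists_le_sylow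
  obtain ⟨g, hg⟩ := MulAction.exists_smul_eq H Q P
  intro x hx
  have : g⁻¹ * x * g ∈ N := by simpa using hN.conj_mem x hx g⁻¹
  have hm : x ∈ ((g • Q : Sylow p H) : Subgroup H) := by
    rw [Sylow.coe_subgroup_smul, Subgroup.mem_pointwise_smul_iff_inv_smul_mem]
    have : g⁻¹ * x * g ∈ (Q : Subgroup H) := hQ this
    simpa [MulAut.conj, mul_assoc] using this
  rw [hg] at hm
  exact hm

lemma exists_fixed {p : ℕ} (hp : p.Prime) {G : Type*} [Group G] [Finite G]
    (Q R : Subgroup G) (hQ : IsPGroup p ↥Q) (hR : IsPGroup p ↥R) (hRne : R ≠ ⊥)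
    (hact : ∀ q ∈ Q, ∀ r ∈ R, q * r * q⁻¹ ∈ R) :
    ∃ x ∈ R, x ≠ 1 ∧ ∀ q ∈ Q, q * x * q⁻¹ = x := by
  haveI : Fact p.Prime := ⟨hp⟩
  letI : SMul ↥Q ↥R := ⟨fun q r => ⟨(q : G) * r * (q : G)⁻¹, hact q q.2 r r.2⟩⟩
  have smul_def : ∀ (q : ↥Q) (r : ↥R), ((q • r : ↥R) : G) = q * r * (q : G)⁻¹ :=
    fun q r => rfl
  letI : MulAction ↥Q ↥R :=
  { one_smul := fun r => by
      apply Subtype.ext; rw [smul_def]; simp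
    mul_smul := fun q q' r => by
      apply Subtype.ext; rw [smul_def, smul_def, smul_def]
      simp [mul_assoc] }
  have key := hQ.card_modEq_card_fixedPoints ↥R
  have hone : (⟨1, one_mem R⟩ : ↥R) ∈ MulAction.fixedPoints ↥Q ↥R := by
    intro q; apply Subtype.ext; rw [smul_def]; simp
  haveI : Nontrivial ↥R := (Subgroup.nontrivial_iff_ne_bot R).mpr hRne
  obtain ⟨n, hn0, hcard⟩ := hR.nontrivial_iff_card.mp inferInstance
  have hdvd : p ∣ Nat.card ↥R := by
    rw [hcard]; exact dvd_pow_self p hn0.ne'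
  have hdvd2 : p ∣ Nat.card (MulAction.fixedPoints ↥Q ↥R) :=
    (Nat.modEq_zero_iff_dvd.mp ((key.symm.trans (Nat.modEq_zero_iff_dvd.mpr hdvd))))
  haveI : Nonempty (MulAction.fixedPoints ↥Q ↥R) := ⟨⟨_, hone⟩⟩
  have hpos : 0 < Nat.card (MulAction.fixedPoints ↥Q ↥R) := Nat.card_pos
  have h2 : 1 < Nat.card (MulAction.fixedPoints ↥Q ↥R) := by
    rcases hdvd2 with ⟨c, hc⟩
    have : c ≠ 0 := by rintro rfl; simp [hc] at hpos
    calc 1 < p := hp.one_lt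
    _ ≤ p * c := Nat.le_mul_of_pos_right p (Nat.pos_of_ne_zero this)
    _ = _ := hc.symm
  haveI : Fintype (MulAction.fixedPoints ↥Q ↥R) := Fintype.ofFinite _
  rw [Nat.card_eq_fintype_card] at h2
  obtain ⟨b, hb⟩ := Fintype.exists_ne_of_one_lt_card h2 ⟨⟨1, one_mem R⟩, hone⟩
  refine ⟨((b : ↥R) : G), (b : ↥R).2, ?_, ?_⟩
  · intro h
    exact hb (Subtype.ext (Subtype.ext h))
  · intro q hq
    have := b.2 ⟨q, hq⟩
    have := congrArg (Subtype.val) this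
    rw [smul_def] at this
    exact this

lemma mem_centralizer_sup {G : Type*} [Group G] {L E : Subgroup G} {x : G}
    (hL : x ∈ centralizer (L : Set G)) (hE : x ∈ centralizer (E : Set G)) :
    x ∈ centralizer ((L ⊔ E : Subgroup G) : Set G) := by
  rw [Subgroup.mem_centralizer_iff]
  intro y hy
  rw [Subgroup.sup_eq_closure] at hy
  induction hy using Subgroup.closure_induction with
  | mem z hz =>
    rcases hz with hz | hz
    · exact Subgroup.mem_centralizer_iff.mp hL z hz
    · exact Subgroup.mem_centralizer_iff.mp hE z hz
  | one => simp
  | mul a b ha hb iha ihb =>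
    calc a * b * x = a * (x * b) := by rw [mul_assoc, ihb]
    _ = x * (a * b) := by rw [← mul_assoc, iha, mul_assoc]
  | inv a ha iha =>
    calc a⁻¹ * x = a⁻¹ * x * a * a⁻¹ := by group
    _ = a⁻¹ * (a * x) * a⁻¹ := by rw [mul_assoc a⁻¹ x a, ← iha]
    _ = x * a⁻¹ := by group

lemma comm_mem_left {G : Type*} [Group G] (L E : Subgroup G)
    (hE : E ≤ Subgroup.normalizer (L : Set G)) (hEab : ∀ x ∈ E, ∀ y ∈ E, x * y = y * x) :
    ∀ x ∈ L ⊔ E, ∀ y ∈ L ⊔ E, x * y * x⁻¹ * y⁻¹ ∈ L := by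
  have hnorm : ∀ x ∈ L ⊔ E, ∀ l ∈ L, x * l * x⁻¹ ∈ L := by
    intro x hx l hl
    have hx' : x ∈ Subgroup.normalizer (L : Set G) := (sup_le Subgroup.le_normalizer hE) hx
    exact (Subgroup.mem_normalizer_iff.mp hx' l).mp hl
  intro x hx y hy
  rw [Subgroup.sup_eq_closure] at hx
  induction hx using Subgroup.closure_induction with
  | mem z hz =>
    rcases hz with hzL | hzE
    · have h1 : y * z⁻¹ * y⁻¹ ∈ L := hnorm y hy _ (inv_mem hzL)
      have h2 := mul_mem hzL h1
      have : z * y * z⁻¹ * y⁻¹ = z * (y * z⁻¹ * y⁻¹) := by group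
      rw [this]; exact h2
    · rw [Subgroup.sup_eq_closure] at hy
      induction hy using Subgroup.closure_induction with
      | mem w hw =>
        rcases hw with hwL | hwE
        · have h1 : z * w * z⁻¹ ∈ L := hnorm z (le_sup_right (a := L) hzE) w hwL
          have : z * w * z⁻¹ * w⁻¹ = (z * w * z⁻¹) * w⁻¹ := by group
          rw [this]; exact mul_mem h1 (inv_mem hwL)
        · have h1 : z * w = w * z := hEab z hzE w hwE
          have : z * w * z⁻¹ * w⁻¹ = (z * w) * (w * z)⁻¹ := by group
          rw [this, h1, mul_inv_cancel]; exact one_mem L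
      | one => simpa using one_mem L
      | mul y1 y2 h1 h2 ih1 ih2 =>
        have hy1 : y1 ∈ L ⊔ E := (Subgroup.sup_eq_closure L E) ▸ h1
        have heq : z * (y1 * y2) * z⁻¹ * (y1 * y2)⁻¹ =
            (z * y1 * z⁻¹ * y1⁻¹) * (y1 * (z * y2 * z⁻¹ * y2⁻¹) * y1⁻¹) := by group
        rw [heq]
        exact mul_mem ih1 (hnorm y1 hy1 _ ih2)
      | inv y1 h1 ih =>
        have hy1 : y1⁻¹ ∈ L ⊔ E := inv_mem ((Subgroup.sup_eq_closure L E) ▸ h1)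
        have heq : z * y1⁻¹ * z⁻¹ * (y1⁻¹)⁻¹ =
            y1⁻¹ * (z * y1 * z⁻¹ * y1⁻¹)⁻¹ * (y1⁻¹)⁻¹ := by group
        rw [heq]
        exact hnorm _ hy1 _ (inv_mem ih)
  | one => simpa using one_mem L
  | mul x1 x2 h1 h2 ih1 ih2 =>
    have hx1 : x1 ∈ L ⊔ E := (Subgroup.sup_eq_closure L E) ▸ h1
    have heq : x1 * x2 * y * (x1 * x2)⁻¹ * y⁻¹ =
        (x1 * (x2 * y * x2⁻¹ * y⁻¹) * x1⁻¹) * (x1 * y * x1⁻¹ * y⁻¹) := by group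
    rw [heq]
    exact mul_mem (hnorm x1 hx1 _ ih2) ih1
  | inv x1 h1 ih =>
    have hx1 : x1⁻¹ ∈ L ⊔ E := inv_mem ((Subgroup.sup_eq_closure L E) ▸ h1)
    have heq : x1⁻¹ * y * (x1⁻¹)⁻¹ * y⁻¹ =
        x1⁻¹ * (x1 * y * x1⁻¹ * y⁻¹)⁻¹ * (x1⁻¹)⁻¹ := by group
    rw [heq]
    exact hnorm _ hx1 _ (inv_mem ih)



end AuxStatement4

open Subgroup Pointwise in
/-- for abelian `p`-subgroups `B, E ≤ N_G(L)` with `LB ≤ LE`, triviality of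
`O_p(C_G(LE))` implies that of `O_p(C_G(LB))`; and if moreover `L` is a component of `G`,
also `O_p(LB) = 1`. -/
theorem statement4 {p : ℕ} (hp : p.Prime) {G : Type*} [Group G] [Finite G]
    (L B E : Subgroup G)
    (hB : B ≤ Subgroup.normalizer (L : Set G)) (hE : E ≤ Subgroup.normalizer (L : Set G))
    (hBp : IsPGroup p ↥B) (hBab : ∀ x ∈ B, ∀ y ∈ B, x * y = y * x)
    (hEp : IsPGroup p ↥E) (hEab : ∀ x ∈ E, ∀ y ∈ E, x * y = y * x)
    (hle : L ⊔ B ≤ L ⊔ E)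
    (hOp : OpTrivial p ↥(Subgroup.centralizer ((L ⊔ E : Subgroup G) : Set G))) :
    OpTrivial p ↥(Subgroup.centralizer ((L ⊔ B : Subgroup G) : Set G)) ∧
    (IsComponent L → OpTrivial p ↥(L ⊔ B : Subgroup G)) := by
  haveI : Fact p.Prime := ⟨hp⟩
  have hLEnorm : L ⊔ E ≤ Subgroup.normalizer (L : Set G) := sup_le Subgroup.le_normalizer hE
  have hLBnorm : L ⊔ B ≤ Subgroup.normalizer (L : Set G) := sup_le Subgroup.le_normalizer hB
  have hcommE := comm_mem_left L E hE hEab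
  have hLBLE : ∀ x ∈ L ⊔ E, ∀ y ∈ L ⊔ B, x * y * x⁻¹ ∈ L ⊔ B := by
    intro x hx y hy
    have h := hcommE x hx y (hle hy)
    have heq : x * y * x⁻¹ = (x * y * x⁻¹ * y⁻¹) * y := by group
    rw [heq]
    exact mul_mem ((le_sup_left : L ≤ L ⊔ B) h) hy
  set C1 := Subgroup.centralizer ((L ⊔ B : Subgroup G) : Set G) with hC1def
  set C2 := Subgroup.centralizer ((L ⊔ E : Subgroup G) : Set G) with hC2def
  have hC1conj : ∀ x ∈ L ⊔ E, ∀ c ∈ C1, x * c * x⁻¹ ∈ C1 := by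
    intro x hx c hc
    rw [hC1def, Subgroup.mem_centralizer_iff]
    intro y hy
    have hy' : x⁻¹ * y * x ∈ L ⊔ B := by
      have h := hLBLE x⁻¹ (inv_mem hx) y hy
      simpa using h
    have hcy := Subgroup.mem_centralizer_iff.mp hc _ hy'
    have heq : y * (x * c * x⁻¹) = x * ((x⁻¹ * y * x) * c) * x⁻¹ := by group
    rw [heq, hcy]
    group
  have hC2leC1 : C2 ≤ C1 := Subgroup.centralizer_le (SetLike.coe_subset_coe.mpr hle)
  have hPart1 : OpTrivial p ↥C1 := by
    have hOpC1 : OpSub p ↥C1 = ⊥ := by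
      by_contra hbot
      set R : Subgroup G := (OpSub p ↥C1).map C1.subtype with hRdef
      have hRle : R ≤ C1 := Subgroup.map_subtype_le _
      have hRp : IsPGroup p ↥R := (OpSub_isPGroup p ↥C1).map C1.subtype
      have hRne : R ≠ ⊥ := by
        intro h
        rw [hRdef, Subgroup.map_eq_bot_iff_of_injective _ (Subgroup.subtype_injective C1)] at h
        exact hbot h
      have hRn : ∀ c ∈ C1, ∀ r ∈ R, c * r * c⁻¹ ∈ R := by
        intro c hc r hr
        rw [hRdef, Subgroup.mem_map] at hr
        obtain ⟨r', hr', rfl⟩ := hr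
        exact ⟨_, (OpSub_normal p ↥C1).conj_mem r' hr' ⟨c, hc⟩, rfl⟩
      have hER : ∀ e ∈ E, ∀ r ∈ R, e * r * e⁻¹ ∈ R := by
        intro e he r hr
        have heLE : e ∈ L ⊔ E := (le_sup_right : E ≤ L ⊔ E) he
        set S : Subgroup G := R.map (MulAut.conj e).toMonoidHom with hSdef
        have hSle : S ≤ C1 := by
          intro s hs
          rw [hSdef, Subgroup.mem_map] at hs
          obtain ⟨r', hr', rfl⟩ := hs
          show e * r' * e⁻¹ ∈ C1
          exact hC1conj e heLE r' (hRle hr')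
        have hSp : IsPGroup p ↥S := hRp.map _
        have hS'n : (S.subgroupOf C1).Normal := by
          constructor
          rintro ⟨s, hsC⟩ hs ⟨c, hc⟩
          rw [Subgroup.mem_subgroupOf] at hs ⊢
          rw [hSdef, Subgroup.mem_map] at hs
          obtain ⟨r', hr', hre⟩ := hs
          have hre' : (e : G) * r' * e⁻¹ = s := hre
          have hc' : e⁻¹ * c * e ∈ C1 := by
            have h := hC1conj e⁻¹ (inv_mem heLE) c hc
            simpa using h
          have hr2 : (e⁻¹ * c * e) * r' * (e⁻¹ * c * e)⁻¹ ∈ R := hRn _ hc' r' hr'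
          rw [hSdef, Subgroup.mem_map]
          refine ⟨_, hr2, ?_⟩
          show e * ((e⁻¹ * c * e) * r' * (e⁻¹ * c * e)⁻¹) * e⁻¹ = c * s * c⁻¹
          rw [← hre']
          group
        have hS'p : IsPGroup p ↥(S.subgroupOf C1) := hSp.comap_subtype
        have hle' : S.subgroupOf C1 ≤ OpSub p ↥C1 := le_OpSub hp ↥C1 hS'n hS'p
        have hmemS : e * r * e⁻¹ ∈ S := by
          rw [hSdef, Subgroup.mem_map]
          exact ⟨r, hr, rfl⟩
        have hmemC : e * r * e⁻¹ ∈ C1 := hSle hmemS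
        have h2 : (⟨e * r * e⁻¹, hmemC⟩ : ↥C1) ∈ OpSub p ↥C1 :=
          hle' (by rw [Subgroup.mem_subgroupOf]; exact hmemS)
        exact ⟨_, h2, rfl⟩
      obtain ⟨x, hxR, hx1, hxE⟩ := exists_fixed hp E R hEp hRp hRne hER
      have hxLcent : x ∈ Subgroup.centralizer (L : Set G) :=
        Subgroup.centralizer_le (SetLike.coe_subset_coe.mpr (le_sup_left : L ≤ L ⊔ B)) (hRle hxR)
      have hxEcent : x ∈ Subgroup.centralizer (E : Set G) := by
        rw [Subgroup.mem_centralizer_iff]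
        intro e he
        have h := hxE e he
        calc e * x = (e * x * e⁻¹) * e := by group
        _ = x * e := by rw [h]
      have hxC2 : x ∈ C2 := mem_centralizer_sup hxLcent hxEcent
      have hFn : ((R ⊓ C2).subgroupOf C2).Normal := by
        constructor
        rintro ⟨f, hfC⟩ hf ⟨d, hd⟩
        rw [Subgroup.mem_subgroupOf] at hf ⊢
        obtain ⟨hfR, hfC2⟩ := Subgroup.mem_inf.mp hf
        show d * f * d⁻¹ ∈ R ⊓ C2
        exact Subgroup.mem_inf.mpr
          ⟨hRn d (hC2leC1 hd) f hfR, mul_mem (mul_mem hd hfC2) (inv_mem hd)⟩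
      have hFp : IsPGroup p ↥((R ⊓ C2).subgroupOf C2) := (hRp.to_inf_left).comap_subtype
      have hFbot := hOp _ hFn hFp
      have hxF : (⟨x, hxC2⟩ : ↥C2) ∈ (R ⊓ C2).subgroupOf C2 := by
        rw [Subgroup.mem_subgroupOf]
        exact Subgroup.mem_inf.mpr ⟨hxR, hxC2⟩
      rw [hFbot, Subgroup.mem_bot] at hxF
      exact hx1 (congrArg Subtype.val hxF)
    intro N hNn hNp
    have hN := le_OpSub hp ↥C1 hNn hNp
    rw [hOpC1] at hN
    exact le_bot_iff.mp hN
  refine ⟨hPart1, ?_⟩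
  rintro ⟨-, hLL, hsimple, a, b, hab⟩
  haveI := hsimple
  intro N hNn hNp
  by_contra hNbot
  set R : Subgroup G := N.map (L ⊔ B).subtype with hRdef
  have hRle : R ≤ L ⊔ B := Subgroup.map_subtype_le _
  have hRp : IsPGroup p ↥R := hNp.map _
  have hRne : R ≠ ⊥ := by
    intro h
    rw [hRdef, Subgroup.map_eq_bot_iff_of_injective _ (Subgroup.subtype_injective _)] at h
    exact hNbot h
  have hRn : ∀ g ∈ L ⊔ B, ∀ r ∈ R, g * r * g⁻¹ ∈ R := by
    intro g hg r hr
    rw [hRdef, Subgroup.mem_map] at hr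
    obtain ⟨r', hr', rfl⟩ := hr
    exact ⟨_, hNn.conj_mem r' hr' ⟨g, hg⟩, rfl⟩
  have hLnorm : ∀ x ∈ L ⊔ B, ∀ l ∈ L, x * l * x⁻¹ ∈ L := by
    intro x hx l hl
    exact (Subgroup.mem_normalizer_iff.mp (hLBnorm hx) l).mp hl
  have hLR : ∀ l ∈ L, ∀ r ∈ R, l * r * l⁻¹ * r⁻¹ ∈ L ⊓ R := by
    intro l hl r hr
    refine Subgroup.mem_inf.mpr ⟨?_, ?_⟩
    · have h1 : r * l⁻¹ * r⁻¹ ∈ L := hLnorm r (hRle hr) _ (inv_mem hl)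
      have heq : l * r * l⁻¹ * r⁻¹ = l * (r * l⁻¹ * r⁻¹) := by group
      rw [heq]
      exact mul_mem hl h1
    · have h1 : l * r * l⁻¹ ∈ R := hRn l ((le_sup_left : L ≤ L ⊔ B) hl) r hr
      exact mul_mem h1 (inv_mem hr)
  have hMn : ((L ⊓ R).subgroupOf L).Normal := by
    constructor
    rintro ⟨m, hmL⟩ hm ⟨l, hl⟩
    rw [Subgroup.mem_subgroupOf] at hm ⊢
    show l * m * l⁻¹ ∈ L ⊓ R
    exact Subgroup.mem_inf.mpr
      ⟨hLnorm l ((le_sup_left : L ≤ L ⊔ B) hl) m (Subgroup.mem_inf.mp hm).1,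
       hRn l ((le_sup_left : L ≤ L ⊔ B) hl) m (Subgroup.mem_inf.mp hm).2⟩
  have hMp : IsPGroup p ↥((L ⊓ R).subgroupOf L) := (hRp.to_inf_right).comap_subtype
  have himn : (((L ⊓ R).subgroupOf L).map (QuotientGroup.mk' (Subgroup.center ↥L))).Normal :=
    hMn.map _ (QuotientGroup.mk'_surjective _)
  rcases himn.eq_bot_or_eq_top with hcase | hcase
  · -- image trivial: L ⊓ R is central in L
    have hZ : ∀ x ∈ L ⊓ R, ∀ l ∈ L, l * x = x * l := by
      intro x hx l hl
      have hmem : (⟨x, (Subgroup.mem_inf.mp hx).1⟩ : ↥L) ∈ (L ⊓ R).subgroupOf L := by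
        rw [Subgroup.mem_subgroupOf]
        exact hx
      have hker := (Subgroup.map_eq_bot_iff _).mp hcase hmem
      rw [QuotientGroup.ker_mk'] at hker
      exact congrArg Subtype.val (Subgroup.mem_center_iff.mp hker ⟨l, hl⟩)
    have hLRle : ⁅L, R⁆ ≤ L ⊓ R := by
      rw [Subgroup.commutator_le]
      intro g hg h hh
      rw [commutatorElement_def]
      exact hLR g hg h hh
    have hcent1 : ⁅L, R⁆ ≤ Subgroup.centralizer (L : Set G) := by
      intro g hg
      rw [Subgroup.mem_centralizer_iff]
      intro l hl
      exact hZ g (hLRle hg) l hl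
    have h1 : ⁅⁅L, R⁆, L⁆ = ⊥ := Subgroup.commutator_eq_bot_iff_le_centralizer.mpr hcent1
    have h2 : ⁅⁅R, L⁆, L⁆ = ⊥ := by rwa [Subgroup.commutator_comm R L]
    have h3 : ⁅⁅L, L⁆, R⁆ = ⊥ := Subgroup.commutator_commutator_eq_bot_of_rotate h1 h2
    rw [hLL] at h3
    have hRcent : R ≤ Subgroup.centralizer (L : Set G) := by
      rw [Subgroup.commutator_comm] at h3
      exact Subgroup.commutator_eq_bot_iff_le_centralizer.mp h3
    obtain ⟨x, hxR, hx1, hxB⟩ := exists_fixed hp B R hBp hRp hRne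
      (fun b hb r hr => hRn b ((le_sup_right : B ≤ L ⊔ B) hb) r hr)
    have hxBcent : x ∈ Subgroup.centralizer (B : Set G) := by
      rw [Subgroup.mem_centralizer_iff]
      intro bb hbb
      have h := hxB bb hbb
      calc bb * x = (bb * x * bb⁻¹) * bb := by group
      _ = x * bb := by rw [h]
    have hxC1 : x ∈ C1 := mem_centralizer_sup (hRcent hxR) hxBcent
    have hKn : ((R ⊓ C1).subgroupOf C1).Normal := by
      constructor
      rintro ⟨f, hfC⟩ hf ⟨c, hc⟩
      rw [Subgroup.mem_subgroupOf] at hf ⊢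
      obtain ⟨hfR, hfC1⟩ := Subgroup.mem_inf.mp hf
      show c * f * c⁻¹ ∈ R ⊓ C1
      have hcf : c * f * c⁻¹ = f := by
        have h := Subgroup.mem_centralizer_iff.mp hc f (hRle hfR)
        rw [← h]
        group
      rw [hcf]
      exact Subgroup.mem_inf.mpr ⟨hfR, hfC1⟩
    have hKp : IsPGroup p ↥((R ⊓ C1).subgroupOf C1) := (hRp.to_inf_left).comap_subtype
    have hKbot := hPart1 _ hKn hKp
    have hxK : (⟨x, hxC1⟩ : ↥C1) ∈ (R ⊓ C1).subgroupOf C1 := by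
      rw [Subgroup.mem_subgroupOf]
      exact Subgroup.mem_inf.mpr ⟨hxR, hxC1⟩
    rw [hKbot, Subgroup.mem_bot] at hxK
    exact hx1 (congrArg Subtype.val hxK)
  · -- image is everything: L/Z(L) would be a p-group, contradiction
    have hQp : IsPGroup p (↥L ⧸ Subgroup.center ↥L) := by
      intro g
      have hg : g ∈ ((L ⊓ R).subgroupOf L).map (QuotientGroup.mk' (Subgroup.center ↥L)) := by
        rw [hcase]
        exact Subgroup.mem_top g
      rw [Subgroup.mem_map] at hg
      obtain ⟨m, hm, hgm⟩ := hg
      obtain ⟨k, hk⟩ := hMp ⟨m, hm⟩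
      refine ⟨k, ?_⟩
      have hmk : (m : ↥L) ^ p ^ k = 1 := by
        have h' := congrArg Subtype.val hk
        simpa using h'
      rw [← hgm, ← map_pow, hmk, map_one]
    haveI : Nontrivial (↥L ⧸ Subgroup.center ↥L) := ⟨⟨a * b, b * a, hab⟩⟩
    haveI : Finite (↥L ⧸ Subgroup.center ↥L) := Quotient.finite _
    have hcent := hQp.center_nontrivial
    rcases Subgroup.Normal.eq_bot_or_eq_top
        (inferInstance : (Subgroup.center (↥L ⧸ Subgroup.center ↥L)).Normal) with hzb | hzt
    · rw [hzb] at hcent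
      obtain ⟨⟨u, hu⟩, ⟨v, hv⟩, huv⟩ := hcent
      rw [Subgroup.mem_bot] at hu hv
      exact huv (Subtype.ext (hu.trans hv.symm))
    · have ha : a ∈ Subgroup.center (↥L ⧸ Subgroup.center ↥L) := by
        rw [hzt]
        exact Subgroup.mem_top a
      exact hab ((Subgroup.mem_center_iff.mp ha b).symm)


end QF
end
end

section
/- Let p be a prime, H ≤ K finite groups, and let E be a nontrivial elementary abelian p-subgroup of K with E ∩ H = 1. Let P be the poset (under inclusion) of those B ∈ A_p(K) with B > E and B ∩ H ≠ 1, and let Q = A_p(C_H(E)). Then B ↦ B ∩ H defines a well-defined monotone map f : P → Q, and C ↦ EC (the subgroup generated by E and C) defines a well-defined monotone map g : Q → P, and these satisfy g(f(B)) = E(B ∩ H) ≤ B for all B ∈ P and f(g(C)) = EC ∩ H ≥ C for all C ∈ Q. -/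
attribute [local instance] Classical.propDecidable

noncomputable section

namespace QF

/-- for `E ∈ A_p(K)` with `E ∩ H = 1`, the maps `B ↦ B ∩ H` and `C ↦ EC`
between the poset `P = {B ∈ A_p(K) : B > E, B ∩ H ≠ 1}` and `Q = A_p(C_H(E))` are
well-defined and monotone, with `g(f(B)) = E(B ∩ H) ≤ B` and `f(g(C)) = EC ∩ H ≥ C`. -/
theorem statement5 {p : ℕ} (hp : p.Prime) {K : Type*} [Group K] [Finite K]
    (H E : Subgroup K) (hE : E ∈ apIn p (⊤ : Subgroup K)) (hEH : E ⊓ H = ⊥) :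
    (∀ B : Subgroup K, B ∈ apIn p (⊤ : Subgroup K) → E < B → B ⊓ H ≠ ⊥ →
      (B ⊓ H ∈ apIn p (⊤ : Subgroup K) ∧
        B ⊓ H ≤ H ⊓ Subgroup.centralizer (E : Set K))) ∧
    (∀ B B' : Subgroup K, B ∈ apIn p (⊤ : Subgroup K) → E < B → B ⊓ H ≠ ⊥ →
      B' ∈ apIn p (⊤ : Subgroup K) → E < B' → B' ⊓ H ≠ ⊥ → B ≤ B' → B ⊓ H ≤ B' ⊓ H) ∧
    (∀ C : Subgroup K, C ∈ apIn p (⊤ : Subgroup K) →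
      C ≤ H ⊓ Subgroup.centralizer (E : Set K) →
      (E ⊔ C ∈ apIn p (⊤ : Subgroup K) ∧ E < E ⊔ C ∧ (E ⊔ C) ⊓ H ≠ ⊥)) ∧
    (∀ C C' : Subgroup K, C ∈ apIn p (⊤ : Subgroup K) →
      C ≤ H ⊓ Subgroup.centralizer (E : Set K) →
      C' ∈ apIn p (⊤ : Subgroup K) → C' ≤ H ⊓ Subgroup.centralizer (E : Set K) →
      C ≤ C' → E ⊔ C ≤ E ⊔ C') ∧
    (∀ B : Subgroup K, B ∈ apIn p (⊤ : Subgroup K) → E < B → B ⊓ H ≠ ⊥ →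
      E ⊔ (B ⊓ H) ≤ B) ∧
    (∀ C : Subgroup K, C ∈ apIn p (⊤ : Subgroup K) →
      C ≤ H ⊓ Subgroup.centralizer (E : Set K) → C ≤ (E ⊔ C) ⊓ H) := by

  classical
  obtain ⟨hEne, ⟨hEcomm, hEp⟩, -⟩ := hE
  -- commutativity of E ⊔ C when C centralizes E
  have key : ∀ C : Subgroup K, C ≤ Subgroup.centralizer (E : Set K) →
      (∀ x ∈ C, ∀ y ∈ C, x * y = y * x) →
      ∀ x ∈ E ⊔ C, ∀ y ∈ E ⊔ C, x * y = y * x := by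
    intro C hCc hCcomm x hx y hy
    have hxc : x ∈ Subgroup.centralizer ((E : Set K) ∪ (C : Set K)) := by
      have h1 : E ⊔ C ≤ Subgroup.centralizer ((E : Set K) ∪ (C : Set K)) := by
        refine sup_le ?_ ?_
        · intro e he
          refine Subgroup.mem_centralizer_iff.2 ?_
          rintro z (hz | hz)
          · exact hEcomm z hz e he
          · exact (Subgroup.mem_centralizer_iff.1 (hCc hz) e he).symm
        · intro c hc
          refine Subgroup.mem_centralizer_iff.2 ?_
          rintro z (hz | hz)
          · exact Subgroup.mem_centralizer_iff.1 (hCc hc) z hz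
          · exact hCcomm z hz c hc
      exact h1 hx
    have hy' : y ∈ Subgroup.centralizer ({x} : Set K) := by
      have : Subgroup.closure ((E : Set K) ∪ (C : Set K)) ≤
          Subgroup.centralizer ({x} : Set K) := by
        refine Subgroup.closure_le _ |>.2 ?_
        intro z hz
        exact Subgroup.mem_centralizer_iff.2 (by
          rintro w rfl
          exact (Subgroup.mem_centralizer_iff.1 hxc z hz).symm)
      rw [Subgroup.sup_eq_closure] at hy
      exact this hy
    exact Subgroup.mem_centralizer_iff.1 hy' x (Set.mem_singleton x)
  refine ⟨?_, ?_, ?_, ?_, ?_, ?_⟩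
  · rintro B ⟨hBne, ⟨hBcomm, hBp⟩, -⟩ hEB hBH
    refine ⟨⟨hBH, ⟨?_, ?_⟩, le_top⟩, ?_⟩
    · intro x hx y hy; exact hBcomm x hx.1 y hy.1
    · intro x hx; exact hBp x hx.1
    · intro x hx
      refine ⟨hx.2, Subgroup.mem_centralizer_iff.2 fun e he => ?_⟩
      exact hBcomm e (le_of_lt hEB he) x hx.1
  · intro B B' _ _ _ _ _ _ hBB'
    exact inf_le_inf_right H hBB'
  · rintro C ⟨hCne, ⟨hCcomm, hCp⟩, -⟩ hCle
    have hCH : C ≤ H := fun x hx => (hCle hx).1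
    have hCc : C ≤ Subgroup.centralizer (E : Set K) := fun x hx => (hCle hx).2
    have hcomm := key C hCc hCcomm
    have hlt : E < E ⊔ C := by
      refine lt_of_le_of_ne le_sup_left ?_
      intro h
      apply hCne
      have : C ≤ E ⊓ H := le_inf (h ▸ le_sup_right) hCH
      rw [hEH] at this
      exact le_bot_iff.1 this
    refine ⟨⟨?_, ⟨hcomm, ?_⟩, le_top⟩, hlt, ?_⟩
    · intro h
      exact hEne (le_bot_iff.1 (h ▸ (le_sup_left : E ≤ E ⊔ C)))
    · -- every element of E ⊔ C has order dividing p
      intro x hx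
      rw [Subgroup.sup_eq_closure] at hx
      induction hx using Subgroup.closure_induction with
      | mem z hz =>
        rcases hz with hz | hz
        · exact hEp z hz
        · exact hCp z hz
      | one => exact one_pow p
      | mul a b ha hb iha ihb =>
        have ha' : a ∈ E ⊔ C := by rw [Subgroup.sup_eq_closure]; exact ha
        have hb' : b ∈ E ⊔ C := by rw [Subgroup.sup_eq_closure]; exact hb
        rw [Commute.mul_pow (hcomm a ha' b hb'), iha, ihb, one_mul]
      | inv a ha iha =>
        rw [inv_pow, iha, inv_one]
    · intro h
      apply hCne
      have : C ≤ (E ⊔ C) ⊓ H := le_inf le_sup_right hCH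
      rw [h] at this
      exact le_bot_iff.1 this
  · intro C C' _ _ _ _ hCC'
    exact sup_le_sup_left hCC' E
  · intro B _ hEB _
    exact sup_le (le_of_lt hEB) inf_le_left
  · intro C _ hCle
    exact le_inf le_sup_right (fun x hx => (hCle hx).1)


end QF
end
end

section
/- Let p be a prime, G a finite group, H ≤ G, and let B be a set of subgroups with A_p(H) ⊆ B ⊆ A_p(G). Put F_B(H) = {E ∈ B : E ∩ H = 1}, so that A_p(H) and F_B(H) are disjoint. Define a relation ≺ on the union X_B(H) = A_p(H) ∪ F_B(H) as follows: for A, A' ∈ A_p(H), A ≺ A' iff A < A' (proper inclusion); for F, F' ∈ F_B(H), F ≺ F' iff F < F' (proper inclusion); for F ∈ F_B(H) and A ∈ A_p(H), F ≺ A iff C_A(F) ≠ 1; and A ≺ F never holds. Then ≺ is a strict partial order (irreflexive and transitive) on X_B(H). -/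
attribute [local instance] Classical.propDecidable

noncomputable section

namespace QF

/-- The order relation `≺` on `X_B(H) = A_p(H) ∪ F_B(H)`. -/
def precX (p : ℕ) {G : Type*} [Group G] (H : Subgroup G) (B : Set (Subgroup G))
    (A A' : Subgroup G) : Prop :=
  (A ∈ apIn p H ∧ A' ∈ apIn p H ∧ A < A') ∨
  ((A ∈ B ∧ A ⊓ H = ⊥) ∧ (A' ∈ B ∧ A' ⊓ H = ⊥) ∧ A < A') ∨
  ((A ∈ B ∧ A ⊓ H = ⊥) ∧ A' ∈ apIn p H ∧
    A' ⊓ Subgroup.centralizer (A : Set G) ≠ ⊥)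

/-- the relation `≺` on `X_B(H)` is a strict partial order
(irreflexive and transitive). -/
theorem statement6 {p : ℕ} (hp : p.Prime) {G : Type*} [Group G] [Finite G]
    (H : Subgroup G) (B : Set (Subgroup G))
    (hB1 : apIn p H ⊆ B) (hB2 : B ⊆ apIn p (⊤ : Subgroup G)) :
    (∀ A, ¬ precX p H B A A) ∧
    (∀ A A' A'', precX p H B A A' → precX p H B A' A'' → precX p H B A A'') := by
  have hdis : ∀ A : Subgroup G, A ∈ apIn p H → A ⊓ H = ⊥ → False := by
    intro A hA hbot
    exact hA.1 (by rw [← hbot, inf_eq_left.mpr hA.2.2])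
  constructor
  · intro A hA
    rcases hA with ⟨_, _, h⟩ | ⟨_, _, h⟩ | ⟨⟨_, hF⟩, hA, _⟩
    · exact lt_irrefl _ h
    · exact lt_irrefl _ h
    · exact hdis A hA hF
  · intro A A' A'' h1 h2
    rcases h1 with ⟨hA, hA', h⟩ | ⟨hF, hF', h⟩ | ⟨hF, hA', hc⟩
    · rcases h2 with ⟨_, hA'', h'⟩ | ⟨hF'', _, _⟩ | ⟨hF'', _, _⟩
      · exact Or.inl ⟨hA, hA'', h.trans h'⟩
      · exact absurd hF''.2 (fun hb => hdis A' hA' hb)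
      · exact absurd hF''.2 (fun hb => hdis A' hA' hb)
    · rcases h2 with ⟨hA'1, _, _⟩ | ⟨_, hF'', h'⟩ | ⟨_, hA'', hc⟩
      · exact absurd hF'.2 (fun hb => hdis A' hA'1 hb)
      · exact Or.inr (Or.inl ⟨hF, hF'', h.trans h'⟩)
      · refine Or.inr (Or.inr ⟨hF, hA'', fun hb => hc ?_⟩)
        rw [← le_bot_iff] at hb ⊢
        exact le_trans (inf_le_inf_left _
          (Subgroup.centralizer_le (SetLike.coe_subset_coe.mpr h.le))) hb
    · rcases h2 with ⟨hA'1, hA'', h'⟩ | ⟨hF'', _, _⟩ | ⟨hF'', _, _⟩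
      · refine Or.inr (Or.inr ⟨hF, hA'', fun hb => hc ?_⟩)
        rw [← le_bot_iff] at hb ⊢
        exact le_trans (inf_le_inf_right _ h'.le) hb
      · exact absurd hF''.2 (fun hb => hdis A' hA' hb)
      · exact absurd hF''.2 (fun hb => hdis A' hA' hb)

end QF
end
end

section
/- Let p be a prime, G a finite group, H ≤ G, and put F_G(H) = {E ∈ A_p(G) : E ∩ H = 1}, which is disjoint from A_p(H). Define a relation ≺ on the union A_p(H) ∪ F_G(H) as follows: for A, A' ∈ A_p(H), A ≺ A' iff A < A' (proper inclusion); for F, F' ∈ F_G(H), F ≺ F' iff F' < F (reverse proper inclusion); for A ∈ A_p(H) and F ∈ F_G(H), A ≺ F iff A ≤ C_H(F); and F ≺ A never holds. Then ≺ is a strict partial order. -/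
attribute [local instance] Classical.propDecidable

noncomputable section

namespace QF

/-- The order relation `≺` on the Thévenaz poset `A_p(H) ∪ F_G(H)` (with the reversed
inclusion order on `F_G(H)`). -/
def precT (p : ℕ) {G : Type*} [Group G] (H : Subgroup G) (A A' : Subgroup G) : Prop :=
  (A ∈ apIn p H ∧ A' ∈ apIn p H ∧ A < A') ∨
  ((A ∈ apIn p (⊤ : Subgroup G) ∧ A ⊓ H = ⊥) ∧
    (A' ∈ apIn p (⊤ : Subgroup G) ∧ A' ⊓ H = ⊥) ∧ A' < A) ∨
  (A ∈ apIn p H ∧ (A' ∈ apIn p (⊤ : Subgroup G) ∧ A' ⊓ H = ⊥) ∧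
    A ≤ H ⊓ Subgroup.centralizer (A' : Set G))


lemma disj_aux {p : ℕ} {G : Type*} [Group G] {H A : Subgroup G}
    (h1 : A ∈ apIn p H) (h2 : A ⊓ H = ⊥) : False := by
  obtain ⟨hne, _, hle⟩ := h1
  exact hne (by rwa [inf_eq_left.mpr hle] at h2)

/-- the relation `≺` on `A_p(H) ∪ F_G(H)` is a strict partial order. -/
theorem statement7 {p : ℕ} (hp : p.Prime) {G : Type*} [Group G] [Finite G]
    (H : Subgroup G) :
    (∀ A, ¬ precT p H A A) ∧
    (∀ A A' A'', precT p H A A' → precT p H A' A'' → precT p H A A'') := by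
  constructor
  · rintro A (⟨_, _, h⟩ | ⟨_, _, h⟩ | ⟨h1, ⟨_, h2⟩, _⟩)
    · exact lt_irrefl _ h
    · exact lt_irrefl _ h
    · exact disj_aux h1 h2
  · rintro A A' A''
      (⟨hA1, hA'1, hlt⟩ | ⟨hA2, hA'2, hlt⟩ | ⟨hA1, hA'2, hle⟩) <;>
      rintro (⟨hA'1b, hA''1, hlt'⟩ | ⟨hA'2b, hA''2, hlt'⟩ | ⟨hA'1b, hA''2, hle'⟩)
    · exact Or.inl ⟨hA1, hA''1, lt_trans hlt hlt'⟩
    · exact absurd hA'2b.2 (fun h => disj_aux hA'1 h)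
    · exact Or.inr (Or.inr ⟨hA1, hA''2, le_trans hlt.le hle'⟩)
    · exact absurd hA'2.2 (fun h => disj_aux hA'1b h)
    · exact Or.inr (Or.inl ⟨hA2, hA''2, lt_trans hlt' hlt⟩)
    · exact absurd hA'2.2 (fun h => disj_aux hA'1b h)
    · exact absurd hA'2.2 (fun h => disj_aux hA'1b h)
    · refine Or.inr (Or.inr ⟨hA1, hA''2, le_trans hle (inf_le_inf_left _ ?_)⟩)
      exact Subgroup.centralizer_le (SetLike.coe_subset_coe.mpr hlt'.le)
    · exact absurd hA'2.2 (fun h => disj_aux hA'1b h)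

end QF
end
end
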